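/- arXiv:1903.08559 — 6 statements merged into one kernel-verified Lean document; each statement's English description precedes it below -/
import Mathlib

section
/- Let (p_i) be a probability distribution supported on ℕ and π : ℕ^ℕ → [0,1) defined by π((n_j)) = lim_{j→∞} T_{n_1} ∘ ⋯ ∘ T_{n_j}(0), where T_n x = p_n x + p̂_n. Then π is surjective onto [0,1). -/
open Set Filter Topology

/-- The coding map `π` is surjective onto `[0,1)`. -/
theorem coding_surjective
    (p : ℕ → ℝ) (hp : ∀ i, p i ∈ Set.Ioo (0:ℝ) 1) (hsum : HasSum p 1)
    (phat : ℕ → ℝ) (hphat : ∀ n, phat n = ∑ i ∈ Finset.range n, p i)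
    (π : (ℕ → ℕ) → ℝ)
    (hπ : ∀ a : ℕ → ℕ, π a = phat (a 0) +
      ∑' j : ℕ, (∏ i ∈ Finset.range (j + 1), p (a i)) * phat (a (j + 1))) :
    ∀ x ∈ Set.Ico (0:ℝ) 1, ∃ a : ℕ → ℕ, π a = x := by
  classical
  intro x hx
  have hp0 : ∀ i, 0 < p i := fun i => (hp i).1
  have hphat' : phat = fun n => ∑ i ∈ Finset.range n, p i := funext hphat
  subst hphat'
  have hphat0 : (∑ i ∈ Finset.range 0, p i) = 0 := by simp
  have hstep : ∀ n, (∑ i ∈ Finset.range (n+1), p i)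
      = (∑ i ∈ Finset.range n, p i) + p n := fun n => Finset.sum_range_succ p n
  have hmono : StrictMono (fun n => ∑ i ∈ Finset.range n, p i) := by
    apply strictMono_nat_of_lt_succ
    intro n
    rw [hstep]
    linarith [hp0 n]
  have htend : Tendsto (fun n => ∑ i ∈ Finset.range n, p i) atTop (𝓝 1) :=
    hsum.tendsto_sum_nat
  have hlt1 : ∀ n, (∑ i ∈ Finset.range n, p i) < 1 := by
    intro n
    have h1 : (∑ i ∈ Finset.range (n+1), p i) ≤ 1 :=
      hmono.monotone.ge_of_tendsto htend (n+1)
    have := hmono (Nat.lt_succ_self n)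
    linarith
  have hnonneg : ∀ n, 0 ≤ (∑ i ∈ Finset.range n, p i) :=
    fun n => Finset.sum_nonneg (fun i _ => (hp0 i).le)
  -- digit function
  have hexists : ∀ y : ℝ, y < 1 → ∃ n, y < ∑ i ∈ Finset.range (n+1), p i := by
    intro y hy
    obtain ⟨m, hm⟩ := (htend.eventually (eventually_gt_nhds hy)).exists
    exact ⟨m, lt_of_lt_of_le hm (hmono.monotone (Nat.le_succ m))⟩
  have hdig : ∀ y : ℝ, 0 ≤ y → y < 1 →
      ∃ n, (∑ i ∈ Finset.range n, p i) ≤ y ∧ y < ∑ i ∈ Finset.range (n+1), p i := by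
    intro y hy0 hy1
    refine ⟨Nat.find (hexists y hy1), ?_, Nat.find_spec (hexists y hy1)⟩
    rcases Nat.eq_zero_or_pos (Nat.find (hexists y hy1)) with h0 | hpos
    · rw [h0]; simpa using hy0
    · have hmin := Nat.find_min (hexists y hy1) (Nat.sub_lt hpos one_pos)
      push_neg at hmin
      have : Nat.find (hexists y hy1) - 1 + 1 = Nat.find (hexists y hy1) :=
        Nat.succ_pred_eq_of_pos hpos
      rwa [this] at hmin
  choose! d hd1 hd2 using hdig
  set f : ℝ → ℝ := fun y => (y - ∑ i ∈ Finset.range (d y), p i) / p (d y) with hf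
  -- invariant
  have hfmem : ∀ y ∈ Ico (0:ℝ) 1, f y ∈ Ico (0:ℝ) 1 := by
    intro y hy
    have h1 := hd1 y hy.1 hy.2
    have h2 := hd2 y hy.1 hy.2
    have hps := hp0 (d y)
    constructor
    · apply div_nonneg (by linarith) hps.le
    · rw [div_lt_one hps]
      have := hstep (d y)
      linarith
  have hiter : ∀ k, f^[k] x ∈ Ico (0:ℝ) 1 := by
    intro k
    induction k with
    | zero => simpa using hx
    | succ k ih => rw [Function.iterate_succ_apply']; exact hfmem _ ih
  -- recurrence
  have hrec : ∀ y ∈ Ico (0:ℝ) 1,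
      y = (∑ i ∈ Finset.range (d y), p i) + p (d y) * f y := by
    intro y hy
    have hps := (hp0 (d y)).ne'
    simp only [hf]
    rw [mul_div_cancel₀ _ hps]
    ring
  set a : ℕ → ℕ := fun k => d (f^[k] x) with ha
  set Q : ℕ → ℝ := fun n => ∏ i ∈ Finset.range n, p (a i) with hQ
  have hQsucc : ∀ n, Q (n+1) = Q n * p (a n) := fun n => Finset.prod_range_succ _ n
  have hQpos : ∀ n, 0 < Q n := fun n => Finset.prod_pos (fun i _ => hp0 (a i))
  -- telescoping
  have htel : ∀ N, x = (∑ i ∈ Finset.range (a 0), p i)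
      + (∑ j ∈ Finset.range N, Q (j+1) * ∑ i ∈ Finset.range (a (j+1)), p i)
      + Q (N+1) * f^[N+1] x := by
    intro N
    induction N with
    | zero =>
      have h := hrec x hx
      have hQ1 : Q 1 = p (a 0) := by simp [hQ]
      have ha0 : a 0 = d x := rfl
      have hfx : f^[0+1] x = f x := by simp
      rw [Finset.sum_range_zero, add_zero, hfx, hQ1, ha0]
      exact h
    | succ N ih =>
      have hy := hiter (N+1)
      have h := hrec _ hy
      have haN : a (N+1) = d (f^[N+1] x) := rfl
      rw [← haN] at h
      have key : Q (N+1) * f^[N+1] x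
          = Q (N+1) * (∑ i ∈ Finset.range (a (N+1)), p i)
            + Q (N+2) * f (f^[N+1] x) := by
        linear_combination Q (N+1) * h - f (f^[N+1] x) * hQsucc (N+1)
      rw [Finset.sum_range_succ, Function.iterate_succ_apply']
      linear_combination ih + key
  -- uniform bound c on p
  obtain ⟨N0, hN0⟩ : ∃ N0, ∀ i ≥ N0, p i ≤ 1/2 := by
    have := hsum.summable.tendsto_atTop_zero
    have h2 := this.eventually (eventually_le_nhds (by norm_num : (0:ℝ) < 1/2))
    exact eventually_atTop.mp h2
  set c : ℝ := max (1/2) (∑ i ∈ Finset.range N0, p i) with hc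
  have hc0 : 0 ≤ c := le_trans (by norm_num) (le_max_left _ _)
  have hc1 : c < 1 := max_lt (by norm_num) (hlt1 N0)
  have hpc : ∀ i, p i ≤ c := by
    intro i
    rcases le_or_gt N0 i with h | h
    · exact le_trans (hN0 i h) (le_max_left _ _)
    · refine le_trans ?_ (le_max_right _ _)
      exact Finset.single_le_sum (f := p) (fun j _ => (hp0 j).le)
        (Finset.mem_range.mpr h)
  have hQle : ∀ n, Q n ≤ c ^ n := by
    intro n
    calc Q n ≤ ∏ i ∈ Finset.range n, c :=
          Finset.prod_le_prod (fun i _ => (hp0 (a i)).le) (fun i _ => hpc (a i))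
      _ = c ^ n := by simp
  -- remainder tends to zero
  have hrem : Tendsto (fun N => Q (N+1) * f^[N+1] x) atTop (𝓝 0) := by
    have hcpow : Tendsto (fun N : ℕ => c ^ (N+1)) atTop (𝓝 0) :=
      ((tendsto_pow_atTop_nhds_zero_of_lt_one hc0 hc1).comp (tendsto_add_atTop_nat 1))
    apply squeeze_zero (fun N => mul_nonneg (hQpos (N+1)).le (hiter (N+1)).1)
      (fun N => ?_) hcpow
    calc Q (N+1) * f^[N+1] x ≤ Q (N+1) * 1 := by
          have := (hiter (N+1)).2
          nlinarith [hQpos (N+1)]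
      _ ≤ c ^ (N+1) := by rw [mul_one]; exact hQle (N+1)
  set g : ℕ → ℝ := fun j => Q (j+1) * ∑ i ∈ Finset.range (a (j+1)), p i with hg
  have hgnonneg : ∀ j, 0 ≤ g j := fun j => mul_nonneg (hQpos (j+1)).le (hnonneg _)
  have hSlim : Tendsto (fun N => ∑ j ∈ Finset.range N, g j) atTop
      (𝓝 (x - ∑ i ∈ Finset.range (a 0), p i)) := by
    have hSN : ∀ N, ∑ j ∈ Finset.range N, g j =
        x - (∑ i ∈ Finset.range (a 0), p i) - Q (N+1) * f^[N+1] x := by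
      intro N
      have := htel N
      linarith
    simp only [hSN]
    have : Tendsto (fun N => x - (∑ i ∈ Finset.range (a 0), p i)
        - Q (N+1) * f^[N+1] x) atTop
        (𝓝 (x - (∑ i ∈ Finset.range (a 0), p i) - 0)) :=
      tendsto_const_nhds.sub hrem
    simpa using this
  have hgsum : Summable g := by
    apply summable_of_sum_range_le (c := x) hgnonneg
    intro n
    have h1 := htel n
    have h2 := mul_nonneg (hQpos (n+1)).le (hiter (n+1)).1
    have h3 := hnonneg (a 0)
    linarith
  have htsum : ∑' j, g j = x - ∑ i ∈ Finset.range (a 0), p i :=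
    tendsto_nhds_unique hgsum.hasSum.tendsto_sum_nat hSlim
  refine ⟨a, ?_⟩
  rw [hπ a]
  have : (∑' j : ℕ, (∏ i ∈ Finset.range (j + 1), p (a i))
      * ∑ i ∈ Finset.range (a (j + 1)), p i) = ∑' j, g j := rfl
  rw [this, htsum]
  ring
end

section
/- Let (p_i) be a probability distribution supported on ℕ and π the induced coding map. If B ⊆ ℕ^ℕ is the set of bounded sequences, then the Hausdorff dimension of π(B) equals 1. -/
open Set MeasureTheory
open scoped NNReal ENNReal

noncomputable def piCode (q qh : ℕ → ℝ) (a : ℕ → ℕ) : ℝ :=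
  qh (a 0) + ∑' j : ℕ, (∏ i ∈ Finset.range (j + 1), q (a i)) * qh (a (j + 1))

section Code

variable {q qh : ℕ → ℝ} {k : ℕ} {r h c ε : ℝ}

lemma code_term_nonneg (hq : ∀ i, i ≤ k → 0 < q i ∧ q i ≤ r)
    (hqh : ∀ i, i ≤ k → 0 ≤ qh i ∧ qh i ≤ h) {a : ℕ → ℕ} (ha : ∀ j, a j ≤ k) (j : ℕ) :
    0 ≤ (∏ i ∈ Finset.range (j + 1), q (a i)) * qh (a (j + 1)) :=
  mul_nonneg (Finset.prod_nonneg fun i _ => (hq _ (ha i)).1.le) (hqh _ (ha _)).1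

lemma code_term_le (hq : ∀ i, i ≤ k → 0 < q i ∧ q i ≤ r) (hr0 : 0 ≤ r)
    (hqh : ∀ i, i ≤ k → 0 ≤ qh i ∧ qh i ≤ h) (hh : 0 ≤ h) {a : ℕ → ℕ} (ha : ∀ j, a j ≤ k)
    (j : ℕ) :
    (∏ i ∈ Finset.range (j + 1), q (a i)) * qh (a (j + 1)) ≤ (h * r) * r ^ j := by
  have h1 : ∏ i ∈ Finset.range (j + 1), q (a i) ≤ r ^ (j + 1) := by
    calc ∏ i ∈ Finset.range (j + 1), q (a i) ≤ ∏ _i ∈ Finset.range (j + 1), r :=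
          Finset.prod_le_prod (fun i _ => (hq _ (ha i)).1.le) (fun i _ => (hq _ (ha i)).2)
      _ = r ^ (j + 1) := by simp
  calc (∏ i ∈ Finset.range (j + 1), q (a i)) * qh (a (j + 1))
      ≤ r ^ (j + 1) * h :=
        mul_le_mul h1 (hqh _ (ha _)).2 (hqh _ (ha _)).1 (pow_nonneg hr0 _)
    _ = (h * r) * r ^ j := by ring

lemma code_summable (hq : ∀ i, i ≤ k → 0 < q i ∧ q i ≤ r) (hr0 : 0 ≤ r) (hr : r < 1)
    (hqh : ∀ i, i ≤ k → 0 ≤ qh i ∧ qh i ≤ h) (hh : 0 ≤ h) {a : ℕ → ℕ} (ha : ∀ j, a j ≤ k) :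
    Summable (fun j : ℕ => (∏ i ∈ Finset.range (j + 1), q (a i)) * qh (a (j + 1))) :=
  Summable.of_nonneg_of_le (code_term_nonneg hq hqh ha) (code_term_le hq hr0 hqh hh ha)
    ((summable_geometric_of_lt_one hr0 hr).mul_left (h * r))

lemma code_shift (hq : ∀ i, i ≤ k → 0 < q i ∧ q i ≤ r) (hr0 : 0 ≤ r) (hr : r < 1)
    (hqh : ∀ i, i ≤ k → 0 ≤ qh i ∧ qh i ≤ h) (hh : 0 ≤ h) {a : ℕ → ℕ} (ha : ∀ j, a j ≤ k) :
    piCode q qh a = qh (a 0) + q (a 0) * piCode q qh (fun j => a (j + 1)) := by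
  have hs := code_summable hq hr0 hr hqh hh ha
  have e1 : ∀ j : ℕ, (∏ i ∈ Finset.range (j + 1 + 1), q (a i)) * qh (a (j + 1 + 1))
      = q (a 0) * ((∏ i ∈ Finset.range (j + 1), q (a (i + 1))) * qh (a (j + 2))) := by
    intro j
    rw [Finset.prod_range_succ']
    ring
  unfold piCode
  rw [Summable.tsum_eq_zero_add hs]
  rw [tsum_congr e1, tsum_mul_left]
  show qh (a 0) + ((∏ i ∈ Finset.range 1, q (a i)) * qh (a 1)
      + q (a 0) * ∑' j : ℕ, (∏ i ∈ Finset.range (j + 1), q (a (i + 1))) * qh (a (j + 2)))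
      = qh (a 0) + q (a 0) * (qh (a 1)
      + ∑' j : ℕ, (∏ i ∈ Finset.range (j + 1), q (a (i + 1))) * qh (a (j + 2)))
  rw [Finset.prod_range_one]
  ring

lemma code_nonneg (hq : ∀ i, i ≤ k → 0 < q i ∧ q i ≤ r)
    (hqh : ∀ i, i ≤ k → 0 ≤ qh i ∧ qh i ≤ h) {a : ℕ → ℕ} (ha : ∀ j, a j ≤ k) :
    0 ≤ piCode q qh a :=
  add_nonneg (hqh _ (ha 0)).1 (tsum_nonneg (code_term_nonneg hq hqh ha))

lemma code_le_div (hq : ∀ i, i ≤ k → 0 < q i ∧ q i ≤ r) (hr0 : 0 ≤ r) (hr : r < 1)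
    (hqh : ∀ i, i ≤ k → 0 ≤ qh i ∧ qh i ≤ h) (hh : 0 ≤ h) {a : ℕ → ℕ} (ha : ∀ j, a j ≤ k) :
    piCode q qh a ≤ h / (1 - r) := by
  have h1r : (0:ℝ) < 1 - r := by linarith
  have hb := Summable.tsum_le_tsum (code_term_le hq hr0 hqh hh ha)
    (code_summable hq hr0 hr hqh hh ha)
    ((summable_geometric_of_lt_one hr0 hr).mul_left (h * r))
  have hgeo : ∑' j : ℕ, (h * r) * r ^ j = (h * r) * (1 - r)⁻¹ := by
    rw [tsum_mul_left, tsum_geometric_of_lt_one hr0 hr]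
  have : piCode q qh a ≤ h + (h * r) * (1 - r)⁻¹ := by
    unfold piCode
    exact add_le_add (hqh _ (ha 0)).2 (hb.trans_eq hgeo)
  have heq : h + (h * r) * (1 - r)⁻¹ = h / (1 - r) := by
    field_simp
    ring
  linarith [heq ▸ this]

lemma code_le (hq : ∀ i, i ≤ k → 0 < q i ∧ q i ≤ r) (hr0 : 0 ≤ r) (hr : r < 1)
    (hqh : ∀ i, i ≤ k → 0 ≤ qh i ∧ qh i ≤ h) (hh : 0 ≤ h)
    (hc : ∀ i, i ≤ k → qh i + q i * c ≤ c) (hc0 : 0 ≤ c) {a : ℕ → ℕ} (ha : ∀ j, a j ≤ k) :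
    piCode q qh a ≤ c := by
  have h1r : (0:ℝ) < 1 - r := by linarith
  have hM : 0 ≤ h / (1 - r) := div_nonneg hh h1r.le
  have key : ∀ n : ℕ, ∀ a : ℕ → ℕ, (∀ j, a j ≤ k) →
      piCode q qh a ≤ c + r ^ n * (h / (1 - r)) := by
    intro n
    induction n with
    | zero =>
        intro a ha
        have := code_le_div hq hr0 hr hqh hh ha
        simp only [pow_zero, one_mul]
        linarith
    | succ n ih =>
        intro a ha
        rw [code_shift hq hr0 hr hqh hh ha]
        have h1 := ih (fun j => a (j + 1)) (fun j => ha (j + 1))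
        have hq0 := hq _ (ha 0)
        have hMn : 0 ≤ r ^ n * (h / (1 - r)) := mul_nonneg (pow_nonneg hr0 _) hM
        calc qh (a 0) + q (a 0) * piCode q qh (fun j => a (j + 1))
            ≤ qh (a 0) + q (a 0) * (c + r ^ n * (h / (1 - r))) := by
              have := mul_le_mul_of_nonneg_left h1 hq0.1.le
              linarith
          _ = (qh (a 0) + q (a 0) * c) + q (a 0) * (r ^ n * (h / (1 - r))) := by ring
          _ ≤ c + r * (r ^ n * (h / (1 - r))) :=
              add_le_add (hc _ (ha 0)) (mul_le_mul_of_nonneg_right hq0.2 hMn)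
          _ = c + r ^ (n + 1) * (h / (1 - r)) := by ring
  have hlim : Filter.Tendsto (fun n : ℕ => c + r ^ n * (h / (1 - r))) Filter.atTop
      (nhds (c + 0 * (h / (1 - r)))) :=
    Filter.Tendsto.const_add _ ((tendsto_pow_atTop_nhds_zero_of_lt_one hr0 hr).mul_const _)
  exact ge_of_tendsto' (by simpa using hlim) (fun n => key n a ha)

lemma code_sub (hq : ∀ i, i ≤ k → 0 < q i ∧ q i ≤ r) (hr0 : 0 ≤ r) (hr : r < 1)
    (hqh : ∀ i, i ≤ k → 0 ≤ qh i ∧ qh i ≤ h) (hh : 0 ≤ h) {n : ℕ} :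
    ∀ {a b : ℕ → ℕ}, (∀ j, a j ≤ k) → (∀ j, b j ≤ k) → (∀ i, i < n → a i = b i) →
    piCode q qh a - piCode q qh b = (∏ i ∈ Finset.range n, q (a i)) *
      (piCode q qh (fun j => a (j + n)) - piCode q qh (fun j => b (j + n))) := by
  induction n with
  | zero =>
      intro a b _ _ _
      simp only [Finset.range_zero, Finset.prod_empty, one_mul]
      rfl
  | succ n ih =>
      intro a b ha hb hab
      have h0 : a 0 = b 0 := hab 0 (Nat.succ_pos n)
      have ih' : piCode q qh (fun j => a (j + 1)) - piCode q qh (fun j => b (j + 1))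
          = (∏ i ∈ Finset.range n, q (a (i + 1))) *
            (piCode q qh (fun j => a (j + n + 1)) - piCode q qh (fun j => b (j + n + 1))) :=
        ih (fun j => ha (j + 1)) (fun j => hb (j + 1)) (fun i hi => hab (i + 1) (by omega))
      show piCode q qh a - piCode q qh b = (∏ i ∈ Finset.range (n + 1), q (a i)) *
        (piCode q qh (fun j => a (j + n + 1)) - piCode q qh (fun j => b (j + n + 1)))
      rw [code_shift hq hr0 hr hqh hh ha, code_shift hq hr0 hr hqh hh hb, h0,
        Finset.prod_range_succ']
      rw [← h0]
      linear_combination q (a 0) * ih'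

lemma code_sep (hq : ∀ i, i ≤ k → 0 < q i ∧ q i ≤ r) (hr0 : 0 ≤ r) (hr : r < 1)
    (hqh : ∀ i, i ≤ k → 0 ≤ qh i ∧ qh i ≤ h) (hh : 0 ≤ h)
    (hc : ∀ i, i ≤ k → qh i + q i * c ≤ c) (hc0 : 0 ≤ c)
    (hsep : ∀ i j, i ≤ k → j ≤ k → i < j → qh i + q i * c + ε ≤ qh j)
    {a b : ℕ → ℕ} (ha : ∀ j, a j ≤ k) (hb : ∀ j, b j ≤ k) (h0 : a 0 < b 0) :
    piCode q qh a + ε ≤ piCode q qh b := by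
  have hbl : qh (b 0) ≤ piCode q qh b := by
    rw [code_shift hq hr0 hr hqh hh hb]
    have h1 := code_nonneg hq hqh (a := fun j => b (j + 1)) (fun j => hb (j + 1))
    nlinarith [(hq _ (hb 0)).1.le]
  have hau : piCode q qh a ≤ qh (a 0) + q (a 0) * c := by
    rw [code_shift hq hr0 hr hqh hh ha]
    have h1 := code_le hq hr0 hr hqh hh hc hc0 (a := fun j => a (j + 1)) (fun j => ha (j + 1))
    nlinarith [(hq _ (ha 0)).1.le]
  have := hsep (a 0) (b 0) (ha 0) (hb 0) h0
  linarith

lemma code_dist_lower (hq : ∀ i, i ≤ k → 0 < q i ∧ q i ≤ r) (hr0 : 0 ≤ r) (hr : r < 1)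
    (hqh : ∀ i, i ≤ k → 0 ≤ qh i ∧ qh i ≤ h) (hh : 0 ≤ h)
    (hc : ∀ i, i ≤ k → qh i + q i * c ≤ c) (hc0 : 0 ≤ c)
    (hsep : ∀ i j, i ≤ k → j ≤ k → i < j → qh i + q i * c + ε ≤ qh j) (hε : 0 ≤ ε)
    {a b : ℕ → ℕ} (ha : ∀ j, a j ≤ k) (hb : ∀ j, b j ≤ k) {n : ℕ}
    (hab : ∀ i, i < n → a i = b i) (hne : a n ≠ b n) :
    (∏ i ∈ Finset.range n, q (a i)) * ε ≤ |piCode q qh a - piCode q qh b| := by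
  have hsub := code_sub hq hr0 hr hqh hh ha hb hab
  set A : ℕ → ℕ := fun j => a (j + n) with hA
  set B : ℕ → ℕ := fun j => b (j + n) with hB
  have hAk : ∀ j, A j ≤ k := fun j => ha (j + n)
  have hBk : ∀ j, B j ≤ k := fun j => hb (j + n)
  have hA0 : A 0 = a n := by simp [hA]
  have hB0 : B 0 = b n := by simp [hB]
  have habs : ε ≤ |piCode q qh A - piCode q qh B| := by
    rcases lt_or_gt_of_ne hne with hlt | hlt
    · have := code_sep hq hr0 hr hqh hh hc hc0 hsep hAk hBk (by rw [hA0, hB0]; exact hlt)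
      rw [abs_sub_comm]
      exact le_abs.2 (Or.inl (by linarith))
    · have := code_sep hq hr0 hr hqh hh hc hc0 hsep hBk hAk (by rw [hA0, hB0]; exact hlt)
      exact le_abs.2 (Or.inl (by linarith))
  have hP : 0 ≤ ∏ i ∈ Finset.range n, q (a i) :=
    Finset.prod_nonneg fun i _ => (hq _ (ha i)).1.le
  calc (∏ i ∈ Finset.range n, q (a i)) * ε
      ≤ (∏ i ∈ Finset.range n, q (a i)) * |piCode q qh A - piCode q qh B| :=
        mul_le_mul_of_nonneg_left habs hP
    _ = |piCode q qh a - piCode q qh b| := by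
        rw [hsub, abs_mul, abs_of_nonneg hP]

lemma code_dist_upper (hq : ∀ i, i ≤ k → 0 < q i ∧ q i ≤ r) (hr0 : 0 ≤ r) (hr : r < 1)
    (hqh : ∀ i, i ≤ k → 0 ≤ qh i ∧ qh i ≤ h) (hh : 0 ≤ h)
    (hc : ∀ i, i ≤ k → qh i + q i * c ≤ c) (hc0 : 0 ≤ c)
    {a b : ℕ → ℕ} (ha : ∀ j, a j ≤ k) (hb : ∀ j, b j ≤ k) {n : ℕ}
    (hab : ∀ i, i < n → a i = b i) :
    |piCode q qh a - piCode q qh b| ≤ (∏ i ∈ Finset.range n, q (a i)) * c := by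
  have hsub := code_sub hq hr0 hr hqh hh ha hb hab
  have hP : 0 ≤ ∏ i ∈ Finset.range n, q (a i) :=
    Finset.prod_nonneg fun i _ => (hq _ (ha i)).1.le
  have h1 := code_nonneg hq hqh (a := fun j => a (j + n)) (fun j => ha (j + n))
  have h2 := code_le hq hr0 hr hqh hh hc hc0 (a := fun j => a (j + n)) (fun j => ha (j + n))
  have h3 := code_nonneg hq hqh (a := fun j => b (j + n)) (fun j => hb (j + n))
  have h4 := code_le hq hr0 hr hqh hh hc hc0 (a := fun j => b (j + n)) (fun j => hb (j + n))
  rw [hsub, abs_mul, abs_of_nonneg hP]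
  refine mul_le_mul_of_nonneg_left ?_ hP
  rw [abs_le]
  constructor <;> linarith

end Code

section Surj

lemma code_surj {q : ℕ → ℝ} {k : ℕ} {r : ℝ}
    (hq : ∀ i, i ≤ k → 0 < q i ∧ q i ≤ r) (hr0 : 0 ≤ r) (hr : r < 1)
    (hsum1 : ∑ i ∈ Finset.range (k + 1), q i = 1) {x : ℝ} (hx : x ∈ Set.Ico (0:ℝ) 1) :
    ∃ a : ℕ → ℕ, (∀ j, a j ≤ k) ∧
      piCode q (fun n => ∑ i ∈ Finset.range n, q i) a = x := by
  classical
  set qh : ℕ → ℝ := fun n => ∑ i ∈ Finset.range n, q i with hqhdef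
  have hqh0 : qh 0 = 0 := by simp [hqhdef]
  have hqhsucc : ∀ n, qh (n + 1) = qh n + q n := by
    intro n; simp [hqhdef, Finset.sum_range_succ]
  have hqhmono : ∀ i j, i ≤ j → j ≤ k + 1 → qh i ≤ qh j := by
    intro i j hij hjk
    apply Finset.sum_le_sum_of_subset_of_nonneg (Finset.range_subset_range.2 hij)
    intro l hl _
    exact (hq l (by simp at hl; omega)).1.le
  have hqhk1 : qh (k + 1) = 1 := hsum1
  have hqhb : ∀ i, i ≤ k → 0 ≤ qh i ∧ qh i ≤ 1 := by
    intro i hi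
    constructor
    · rw [← hqh0]; exact hqhmono 0 i (Nat.zero_le _) (by omega)
    · rw [← hqhk1]; exact hqhmono i (k + 1) (by omega) (by omega)
  have hone : (0:ℝ) ≤ 1 := zero_le_one
  have hc : ∀ i, i ≤ k → qh i + q i * 1 ≤ 1 := by
    intro i hi
    rw [mul_one, ← hqhsucc, ← hqhk1]
    exact hqhmono (i + 1) (k + 1) (by omega) (by omega)
  -- digit function
  set D : ℝ → ℕ := fun y => Nat.findGreatest (fun i => qh i ≤ y) k with hDdef
  have hdig : ∀ y, y ∈ Set.Ico (0:ℝ) 1 → D y ≤ k ∧ qh (D y) ≤ y ∧ y < qh (D y) + q (D y) := by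
    intro y hy
    have hDk : D y ≤ k := Nat.findGreatest_le k
    have hspec : qh (D y) ≤ y := by
      have := Nat.findGreatest_spec (P := fun i => qh i ≤ y) (Nat.zero_le k)
        (by show qh 0 ≤ y; rw [hqh0]; exact hy.1)
      exact this
    refine ⟨hDk, hspec, ?_⟩
    rcases eq_or_lt_of_le hDk with heq | hlt
    · rw [← hqhsucc, heq, hqhk1]
      exact hy.2
    · have hDfg : D y = Nat.findGreatest (fun i => qh i ≤ y) k := rfl
      have := Nat.findGreatest_is_greatest (P := fun i => qh i ≤ y) (n := k) (k := D y + 1)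
        (by rw [← hDfg]; exact Nat.lt_succ_self _) (by omega)
      rw [← hqhsucc]
      exact lt_of_not_ge this
  -- the recursive sequence
  set ys : ℕ → ℝ := fun n => Nat.rec x (fun _ y => (y - qh (D y)) / q (D y)) n with hysdef
  have hys0 : ys 0 = x := rfl
  have hyssucc : ∀ n, ys (n + 1) = (ys n - qh (D (ys n))) / q (D (ys n)) := fun n => rfl
  set a : ℕ → ℕ := fun n => D (ys n) with hadef
  have hIco : ∀ n, ys n ∈ Set.Ico (0:ℝ) 1 := by
    intro n
    induction n with
    | zero => exact hx
    | succ n ihn =>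
        obtain ⟨hDk, h1, h2⟩ := hdig (ys n) ihn
        have hqpos := (hq _ hDk).1
        rw [hyssucc]
        constructor
        · exact div_nonneg (by linarith) hqpos.le
        · rw [div_lt_one hqpos]; linarith
  have hak : ∀ n, a n ≤ k := fun n => (hdig (ys n) (hIco n)).1
  have hkey : ∀ n, ys n = qh (a n) + q (a n) * ys (n + 1) := by
    intro n
    have hqpos := (hq _ (hak n)).1
    change 0 < q (D (ys n)) at hqpos
    change ys n = qh (D (ys n)) + q (D (ys n)) * ys (n + 1)
    rw [hyssucc]
    field_simp
    ring
  refine ⟨a, hak, ?_⟩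
  -- main identity by induction
  have hdiff : ∀ n, x - piCode q qh a = (∏ i ∈ Finset.range n, q (a i)) *
      (ys n - piCode q qh (fun j => a (j + n))) := by
    intro n
    induction n with
    | zero =>
        simp only [Finset.range_zero, Finset.prod_empty, one_mul, hys0]
        rfl
    | succ n ihn =>
        have hfl : (fun j => a (j + 1 + n)) = (fun j => a (j + n + 1)) := by
          funext j
          have hjn : j + 1 + n = j + n + 1 := by omega
          rw [hjn]
        have hshift : piCode q qh (fun j => a (j + n)) = qh (a n) + q (a n) *
            piCode q qh (fun j => a (j + n + 1)) := by
          have h' : piCode q qh (fun j => a (j + n)) = qh (a (0 + n)) + q (a (0 + n)) *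
              piCode q qh (fun j => a (j + 1 + n)) :=
            code_shift hq hr0 hr hqhb hone (fun j => hak (j + n))
          rw [h', Nat.zero_add, hfl]
        show x - piCode q qh a = (∏ i ∈ Finset.range (n + 1), q (a i)) *
          (ys (n + 1) - piCode q qh (fun j => a (j + n + 1)))
        rw [Finset.prod_range_succ]
        have hk := hkey n
        calc x - piCode q qh a
            = (∏ i ∈ Finset.range n, q (a i)) *
              (ys n - piCode q qh (fun j => a (j + n))) := ihn
          _ = (∏ i ∈ Finset.range n, q (a i)) * q (a n) *
              (ys (n + 1) - piCode q qh (fun j => a (j + n + 1))) := by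
              rw [hshift, hk]; ring
  -- limit argument
  have hbound : ∀ n, |x - piCode q qh a| ≤ r ^ n := by
    intro n
    rw [hdiff n]
    have hP : 0 ≤ ∏ i ∈ Finset.range n, q (a i) :=
      Finset.prod_nonneg fun i _ => (hq _ (hak i)).1.le
    have hPr : ∏ i ∈ Finset.range n, q (a i) ≤ r ^ n := by
      calc ∏ i ∈ Finset.range n, q (a i) ≤ ∏ _i ∈ Finset.range n, r :=
            Finset.prod_le_prod (fun i _ => (hq _ (hak i)).1.le) (fun i _ => (hq _ (hak i)).2)
        _ = r ^ n := by simp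
    have h1 : 0 ≤ piCode q qh (fun j => a (j + n)) :=
      code_nonneg hq hqhb (fun j => hak (j + n))
    have h2 : piCode q qh (fun j => a (j + n)) ≤ 1 :=
      code_le hq hr0 hr hqhb hone hc hone (fun j => hak (j + n))
    have h3 := (hIco n).1
    have h4 := (hIco n).2
    have habs : |ys n - piCode q qh (fun j => a (j + n))| ≤ 1 := by
      rw [abs_le]; constructor <;> linarith
    rw [abs_mul, abs_of_nonneg hP]
    calc (∏ i ∈ Finset.range n, q (a i)) * |ys n - piCode q qh (fun j => a (j + n))|
        ≤ (∏ i ∈ Finset.range n, q (a i)) * 1 := mul_le_mul_of_nonneg_left habs hP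
      _ ≤ r ^ n := by rw [mul_one]; exact hPr
  have : |x - piCode q qh a| ≤ 0 :=
    ge_of_tendsto' (tendsto_pow_atTop_nhds_zero_of_lt_one hr0 hr) hbound
  have := abs_nonneg (x - piCode q qh a)
  have : x - piCode q qh a = 0 := by
    have := abs_eq_zero.1 (le_antisymm ‹|x - piCode q qh a| ≤ 0› (abs_nonneg _))
    exact this
  linarith [this]

end Surj

/-- The set of numbers whose digit sequence is bounded has full
Hausdorff dimension 1. -/
theorem dimH_bounded_sequences
    (p : ℕ → ℝ) (hp : ∀ i, p i ∈ Set.Ioo (0:ℝ) 1) (hsum : HasSum p 1)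
    (phat : ℕ → ℝ) (hphat : ∀ n, phat n = ∑ i ∈ Finset.range n, p i)
    (π : (ℕ → ℕ) → ℝ)
    (hπ : ∀ a : ℕ → ℕ, π a = phat (a 0) +
      ∑' j : ℕ, (∏ i ∈ Finset.range (j + 1), p (a i)) * phat (a (j + 1))) :
    dimH (π '' {a : ℕ → ℕ | ∃ k, ∀ j, a j ≤ k}) = 1 := by
  classical
  have hπc : ∀ a, π a = piCode p phat a := fun a => hπ a
  have hphatmono : ∀ i j, i ≤ j → phat i ≤ phat j := by
    intro i j hij
    rw [hphat, hphat]
    exact Finset.sum_le_sum_of_subset_of_nonneg (Finset.range_subset_range.2 hij)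
      (fun l _ _ => (hp l).1.le)
  have hphatsucc : ∀ n, phat (n + 1) = phat n + p n := by
    intro n; rw [hphat, hphat, Finset.sum_range_succ]
  have hphat0 : ∀ n, 0 ≤ phat n := by
    intro n; rw [hphat]; exact Finset.sum_nonneg fun l _ => (hp l).1.le
  have hphat1 : ∀ n, phat n ≤ 1 := by
    intro n; rw [hphat]; exact sum_le_hasSum _ (fun i _ => (hp i).1.le) hsum
  have hphatlt : ∀ n, phat n < 1 := by
    intro n
    have h1 := hphat1 (n + 1)
    have h2 := hphatsucc n
    have h3 := (hp n).1
    linarith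
  refine le_antisymm ?_ ?_
  · calc dimH (π '' {a : ℕ → ℕ | ∃ k, ∀ j, a j ≤ k}) ≤ dimH (univ : Set ℝ) :=
        dimH_mono (subset_univ _)
      _ = 1 := Real.dimH_univ
  apply ENNReal.le_of_forall_nnreal_lt
  intro s hs1
  rcases eq_or_ne s 0 with rfl | hs0
  · simp
  have hspos : (0:ℝ) < (s:ℝ) := by positivity
  have hslt : (s:ℝ) < 1 := by
    have := ENNReal.coe_lt_one_iff.1 hs1
    exact_mod_cast this
  set sr : ℝ := (s : ℝ) with hsrdef
  set δ := p 0 ^ sr - p 0 with hδdef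
  have hδ : 0 < δ := by
    have h1 : p 0 ^ (1:ℝ) < p 0 ^ sr :=
      Real.rpow_lt_rpow_of_exponent_gt (hp 0).1 (hp 0).2 hslt
    rw [Real.rpow_one] at h1
    simp only [hδdef]
    linarith
  have hple : ∀ i, p i ≤ p i ^ sr := by
    intro i
    have h1 : p i ^ (1:ℝ) ≤ p i ^ sr :=
      Real.rpow_le_rpow_of_exponent_ge (hp i).1 (hp i).2.le hslt.le
    rwa [Real.rpow_one] at h1
  obtain ⟨m, hm2, hmsum⟩ : ∃ m, 2 ≤ m ∧ 1 - δ < ∑ i ∈ Finset.range m, p i :=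
    ((Filter.eventually_ge_atTop 2).and
      (hsum.tendsto_sum_nat.eventually (eventually_gt_nhds (by linarith)))).exists
  set k := m - 1 with hkdef
  have hk1 : 1 ≤ k := by omega
  have hkm : k + 1 = m := by omega
  set S := ∑ i ∈ Finset.range (k + 1), p i ^ sr with hSdef
  have hS1 : 1 ≤ S := by
    have h1 : δ ≤ ∑ i ∈ Finset.range (k + 1), (p i ^ sr - p i) :=
      Finset.single_le_sum (f := fun i => p i ^ sr - p i)
        (fun i _ => by show (0:ℝ) ≤ p i ^ sr - p i; linarith [hple i]) (by simp)
    have h2 : ∑ i ∈ Finset.range (k + 1), (p i ^ sr - p i)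
        = S - ∑ i ∈ Finset.range (k + 1), p i := by
      rw [Finset.sum_sub_distrib]
    rw [← hkm] at hmsum
    linarith
  have hSpos : 0 < S := lt_of_lt_of_le one_pos hS1
  have hne : (Finset.range (k + 1)).Nonempty := ⟨0, by simp⟩
  set rp := (Finset.range (k + 1)).sup' hne p with hrpdef
  have hrp1 : rp < 1 := (Finset.sup'_lt_iff hne).2 fun i _ => (hp i).2
  have hrple : ∀ i, i ≤ k → p i ≤ rp := fun i hi =>
    Finset.le_sup' p (Finset.mem_range.2 (by omega))
  have hrp0 : 0 ≤ rp := le_trans (hp 0).1.le (hrple 0 (by omega))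
  set pmin := (Finset.range (k + 1)).inf' hne p with hpmindef
  have hpmin0 : 0 < pmin := (Finset.lt_inf'_iff hne).2 fun i _ => (hp i).1
  have hpminle : ∀ i, i ≤ k → pmin ≤ p i := fun i hi =>
    Finset.inf'_le p (Finset.mem_range.2 (by omega))
  set c := phat k / (1 - p k) with hcdef
  have h1pk : 0 < 1 - p k := by linarith [(hp k).2]
  have hc0 : 0 ≤ c := div_nonneg (hphat0 k) h1pk.le
  have hck : phat k + p k * c = c := by
    rw [hcdef]
    field_simp
    ring
  have hc1 : c < 1 := by
    rw [hcdef, div_lt_one h1pk]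
    have h1 := hphatlt (k + 1)
    rw [hphatsucc] at h1
    linarith
  have hqp : ∀ i, i ≤ k → 0 < p i ∧ p i ≤ rp := fun i hi => ⟨(hp i).1, hrple i hi⟩
  have hqhp : ∀ i, i ≤ k → 0 ≤ phat i ∧ phat i ≤ 1 := fun i _ => ⟨hphat0 i, hphat1 i⟩
  have hcp : ∀ i, i ≤ k → phat i + p i * c ≤ c := by
    intro i hi
    rcases eq_or_lt_of_le hi with rfl | hik
    · exact le_of_eq hck
    · have h1 : phat i + p i * c ≤ phat i + p i := by nlinarith [(hp i).1]
      have h2 : phat i + p i = phat (i + 1) := (hphatsucc i).symm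
      have h3 : phat (i + 1) ≤ phat k := hphatmono _ _ (by omega)
      have h4 : phat k ≤ c := by nlinarith [(hp k).1]
      linarith
  set ε := pmin * (1 - c) with hεdef
  have hε : 0 < ε := mul_pos hpmin0 (by linarith)
  have hsepp : ∀ i j, i ≤ k → j ≤ k → i < j → phat i + p i * c + ε ≤ phat j := by
    intro i j hi hj hij
    have h1 : phat (i + 1) ≤ phat j := hphatmono _ _ (by omega)
    have h2 := hphatsucc i
    have h3 : p i * c + ε ≤ p i := by nlinarith [hpminle i hi]
    linarith
  set Bk : Set (ℕ → ℕ) := {a | ∀ j, a j ≤ k} with hBkdef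
  have hπinj : Set.InjOn π Bk := by
    intro a ha b hb heq
    by_contra hne'
    have hex : ∃ n, a n ≠ b n := by
      by_contra hco; push_neg at hco; exact hne' (funext hco)
    have hn : a (Nat.find hex) ≠ b (Nat.find hex) := Nat.find_spec hex
    have hlt : ∀ i, i < Nat.find hex → a i = b i := fun i hi =>
      not_not.mp (Nat.find_min hex hi)
    have hlow := code_dist_lower hqp hrp0 hrp1 hqhp zero_le_one hcp hc0 hsepp hε.le
      ha hb hlt hn
    rw [← hπc a, ← hπc b] at hlow
    rw [heq, sub_self, abs_zero] at hlow
    have hPpos : 0 < ∏ i ∈ Finset.range (Nat.find hex), p (a i) :=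
      Finset.prod_pos fun i _ => (hp (a i)).1
    nlinarith
  set q : ℕ → ℝ := fun i => p i ^ sr / S with hqdef
  have hq0 : ∀ i, 0 < q i := fun i => div_pos (Real.rpow_pos_of_pos (hp i).1 _) hSpos
  have hqsum : ∑ i ∈ Finset.range (k + 1), q i = 1 := by
    rw [hqdef, ← Finset.sum_div]
    exact div_self hSpos.ne'
  set qmin := (Finset.range (k + 1)).inf' hne q with hqmindef
  have hqmin0 : 0 < qmin := (Finset.lt_inf'_iff hne).2 fun i _ => hq0 i
  set rq := 1 - qmin with hrqdef
  have hrq1 : rq < 1 := by rw [hrqdef]; linarith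
  have hqle : ∀ i, i ≤ k → q i ≤ rq := by
    intro i hi
    obtain ⟨j, hjmem, hji⟩ : ∃ j, j ∈ Finset.range (k + 1) ∧ j ≠ i := by
      rcases eq_or_ne i 0 with rfl | hi0
      · exact ⟨1, Finset.mem_range.2 (by omega), by omega⟩
      · exact ⟨0, Finset.mem_range.2 (by omega), Ne.symm hi0⟩
    have hsubset : ({i, j} : Finset ℕ) ⊆ Finset.range (k + 1) := by
      intro l hl
      rcases Finset.mem_insert.1 hl with rfl | hl'
      · exact Finset.mem_range.2 (by omega)
      · rwa [Finset.mem_singleton.1 hl']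
    have hpair : q i + q j ≤ ∑ l ∈ Finset.range (k + 1), q l := by
      calc q i + q j = ∑ l ∈ ({i, j} : Finset ℕ), q l := (Finset.sum_pair (Ne.symm hji)).symm
        _ ≤ _ := Finset.sum_le_sum_of_subset_of_nonneg hsubset (fun l _ _ => (hq0 l).le)
    have hqj : qmin ≤ q j := Finset.inf'_le q hjmem
    rw [hqsum] at hpair
    rw [hrqdef]
    linarith
  have hrq0 : 0 ≤ rq := le_trans (hq0 0).le (hqle 0 (by omega))
  set qh : ℕ → ℝ := fun n => ∑ i ∈ Finset.range n, q i with hqhdef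
  have hqhsucc : ∀ n, qh (n + 1) = qh n + q n := by
    intro n; rw [hqhdef]; exact Finset.sum_range_succ q n
  have hqh0 : ∀ n, 0 ≤ qh n := by
    intro n; rw [hqhdef]; exact Finset.sum_nonneg fun l _ => (hq0 l).le
  have hqhle1 : ∀ i, i ≤ k + 1 → qh i ≤ 1 := by
    intro i hi
    rw [hqhdef, ← hqsum]
    exact Finset.sum_le_sum_of_subset_of_nonneg (Finset.range_subset_range.2 hi)
      (fun l _ _ => (hq0 l).le)
  have hqhq : ∀ i, i ≤ k → 0 ≤ qh i ∧ qh i ≤ 1 := fun i hi =>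
    ⟨hqh0 i, hqhle1 i (by omega)⟩
  have hqq : ∀ i, i ≤ k → 0 < q i ∧ q i ≤ rq := fun i hi => ⟨hq0 i, hqle i hi⟩
  have hcq : ∀ i, i ≤ k → qh i + q i * 1 ≤ 1 := by
    intro i hi
    rw [mul_one, ← hqhsucc]
    exact hqhle1 (i + 1) (by omega)
  set E := π '' Bk with hEdef
  set g : ℝ → ℝ := fun x => piCode q qh (Function.invFunOn π Bk x) with hgdef
  set C : ℝ≥0 := Real.toNNReal (ε ^ (-sr)) with hCdef
  have hHolder : HolderOnWith C s g E := by
    intro x hx y hy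
    obtain ⟨a0, ha0, ha0x⟩ := hx
    obtain ⟨b0, hb0, hb0y⟩ := hy
    have hexa : ∃ a ∈ Bk, π a = x := ⟨a0, ha0, ha0x⟩
    have hexb : ∃ b ∈ Bk, π b = y := ⟨b0, hb0, hb0y⟩
    set A := Function.invFunOn π Bk x with hAdef
    set B := Function.invFunOn π Bk y with hBdef
    have hA : A ∈ Bk := Function.invFunOn_mem hexa
    have hB : B ∈ Bk := Function.invFunOn_mem hexb
    have hAx : π A = x := Function.invFunOn_eq hexa
    have hBy : π B = y := Function.invFunOn_eq hexb
    have hgx : g x = piCode q qh A := rfl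
    have hgy : g y = piCode q qh B := rfl
    by_cases hAB : A = B
    · have hgeq : g x = g y := by rw [hgx, hgy, hAB]
      rw [hgeq, edist_self]
      exact zero_le
    · have hex : ∃ n, A n ≠ B n := by
        by_contra hco; push_neg at hco; exact hAB (funext hco)
      have hn : A (Nat.find hex) ≠ B (Nat.find hex) := Nat.find_spec hex
      have hlt : ∀ i, i < Nat.find hex → A i = B i := fun i hi =>
        not_not.mp (Nat.find_min hex hi)
      have hlow := code_dist_lower hqp hrp0 hrp1 hqhp zero_le_one hcp hc0 hsepp hε.le
        hA hB hlt hn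
      have hup := code_dist_upper hqq hrq0 hrq1 hqhq zero_le_one hcq zero_le_one hA hB hlt
      rw [mul_one] at hup
      set n := Nat.find hex
      set Pn := ∏ i ∈ Finset.range n, p (A i) with hPndef
      set Qn := ∏ i ∈ Finset.range n, q (A i) with hQndef
      have hPn0 : 0 ≤ Pn := Finset.prod_nonneg fun i _ => (hp (A i)).1.le
      have hQP : Qn ≤ Pn ^ sr := by
        have h1 : Qn ≤ ∏ i ∈ Finset.range n, p (A i) ^ sr :=
          Finset.prod_le_prod (fun i _ => (hq0 _).le)
            (fun i _ => div_le_self (Real.rpow_pos_of_pos (hp _).1 _).le hS1)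
        have h2 : ∏ i ∈ Finset.range n, p (A i) ^ sr = Pn ^ sr :=
          Real.finset_prod_rpow _ _ (fun i _ => (hp (A i)).1.le) sr
        rw [← h2]
        exact h1
      have hdxy : Pn * ε ≤ |x - y| := by
        rw [← hAx, ← hBy, hπc A, hπc B]
        exact hlow
      have hgxy : |g x - g y| ≤ Qn := by
        rw [hgx, hgy]
        exact hup
      have hPle : Pn ≤ |x - y| / ε := (le_div_iff₀ hε).2 hdxy
      have key : |g x - g y| ≤ ε ^ (-sr) * |x - y| ^ sr := by
        have h2 : Pn ^ sr ≤ (|x - y| / ε) ^ sr := Real.rpow_le_rpow hPn0 hPle hspos.le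
        have h3 : (|x - y| / ε) ^ sr = ε ^ (-sr) * |x - y| ^ sr := by
          rw [Real.div_rpow (abs_nonneg _) hε.le, Real.rpow_neg hε.le]
          ring
        calc |g x - g y| ≤ Qn := hgxy
          _ ≤ Pn ^ sr := hQP
          _ ≤ (|x - y| / ε) ^ sr := h2
          _ = _ := h3
      rw [edist_dist, edist_dist, Real.dist_eq, Real.dist_eq]
      rw [ENNReal.ofReal_rpow_of_nonneg (abs_nonneg _) hspos.le]
      have hCoe : (C : ℝ≥0∞) = ENNReal.ofReal (ε ^ (-sr)) := rfl
      rw [hCoe, ← ENNReal.ofReal_mul (by positivity : (0:ℝ) ≤ ε ^ (-sr))]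
      exact ENNReal.ofReal_le_ofReal key
  have him : Set.Ico (0:ℝ) 1 ⊆ g '' E := by
    intro x hx
    obtain ⟨a, hak, hax⟩ := code_surj hqq hrq0 hrq1 hqsum hx
    have haBk : a ∈ Bk := hak
    refine ⟨π a, ⟨a, haBk, rfl⟩, ?_⟩
    have h1 : Function.invFunOn π Bk (π a) = a :=
      hπinj (Function.invFunOn_mem ⟨a, haBk, rfl⟩) haBk (Function.invFunOn_eq ⟨a, haBk, rfl⟩)
    show piCode q qh (Function.invFunOn π Bk (π a)) = x
    rw [h1]
    exact hax
  have hIcodim : dimH (Set.Ico (0:ℝ) 1) = 1 := by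
    have h1 : dimH (Set.Ico (0:ℝ) 1) = (Module.finrank ℝ ℝ : ℝ≥0∞) :=
      Real.dimH_of_nonempty_interior (by
        rw [interior_Ico]
        exact ⟨(1:ℝ)/2, by norm_num⟩)
    rw [h1, Module.finrank_self, Nat.cast_one]
  have hspos' : 0 < s := zero_lt_iff.2 hs0
  have h1le : (1:ℝ≥0∞) ≤ dimH E / (s : ℝ≥0∞) := by
    calc (1:ℝ≥0∞) = dimH (Set.Ico (0:ℝ) 1) := hIcodim.symm
      _ ≤ dimH (g '' E) := dimH_mono him
      _ ≤ dimH E / s := hHolder.dimH_image_le hspos'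
  have hfin := (ENNReal.le_div_iff_mul_le (Or.inl (by exact_mod_cast hs0))
    (Or.inl ENNReal.coe_ne_top)).1 h1le
  rw [one_mul] at hfin
  refine hfin.trans ?_
  rw [hEdef]
  exact dimH_mono (Set.image_mono (fun a ha => ⟨k, ha⟩))
end

section
/- Fix n ≥ 2. For p ∈ (0,1), let d(p) ∈ (0,1) be the unique solution of (1−p^{d n})(1−p)^d/(1−p^d) = 1. Then d(p) → 1 as p → 0⁺ and d(p) → 0 as p → 1⁻; consequently, by continuity, d attains every value in (0,1) as p ranges over (0,1). -/
open Set Real Filter Topology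

noncomputable def moranS (n : ℕ) (p e : ℝ) : ℝ :=
  ∑ i ∈ Finset.range n, ((1 - p) * p ^ i) ^ e

lemma moranS_eq {n : ℕ} {p e : ℝ} (hp : 0 < p) (hp1 : p < 1) (he : 0 < e) :
    (1 - p ^ (e * n)) * (1 - p) ^ e / (1 - p ^ e) = moranS n p e := by
  have hx1 : p ^ e < 1 := Real.rpow_lt_one hp.le hp1 he
  have hne : (1 : ℝ) - p ^ e ≠ 0 := by linarith
  have hterm : ∀ i : ℕ, ((1 - p) * p ^ i) ^ e = (1 - p) ^ e * (p ^ e) ^ i := by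
    intro i
    rw [Real.mul_rpow (by linarith) (pow_nonneg hp.le i), ← Real.rpow_natCast p i,
      ← Real.rpow_natCast (p ^ e) i, ← Real.rpow_mul hp.le, ← Real.rpow_mul hp.le,
      mul_comm (i : ℝ) e]
  have hpe : p ^ (e * n) = (p ^ e) ^ (n : ℕ) := by
    rw [Real.rpow_mul hp.le, Real.rpow_natCast]
  have hflip : ((p ^ e) ^ n - 1) / (p ^ e - 1) = (1 - (p ^ e) ^ n) / (1 - p ^ e) := by
    rw [← neg_sub (1:ℝ) ((p ^ e) ^ n), ← neg_sub (1:ℝ) (p ^ e), neg_div_neg_eq]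
  unfold moranS
  simp_rw [hterm]
  rw [← Finset.mul_sum, geom_sum_eq hx1.ne n, hpe, hflip]
  ring

lemma moranS_strictAnti {n : ℕ} {p : ℝ} (hn : n ≠ 0) (hp : 0 < p) (hp1 : p < 1) :
    StrictAnti (moranS n p) := by
  intro a b hab
  apply Finset.sum_lt_sum_of_nonempty (Finset.nonempty_range_iff.2 hn)
  intro i _
  have hb0 : 0 < (1 - p) * p ^ i := mul_pos (by linarith) (pow_pos hp i)
  have hb1 : (1 - p) * p ^ i < 1 := by
    have h1 : p ^ i ≤ 1 := pow_le_one₀ hp.le hp1.le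
    nlinarith
  exact Real.rpow_lt_rpow_of_exponent_gt hb0 hb1 hab

lemma moranS_continuous (n : ℕ) {e : ℝ} (he : 0 ≤ e) :
    Continuous (fun p => moranS n p e) := by
  unfold moranS
  apply continuous_finset_sum
  intro i _
  exact (((continuous_const.sub continuous_id).mul (continuous_pow i)).rpow_const
    (fun x => Or.inr he))

lemma moranS_gt_one {n : ℕ} (hn : 2 ≤ n) {y : ℝ} (hy : 0 < y) (hy1 : y < 1) :
    ∀ᶠ p in 𝓝[>] (0 : ℝ), 1 < moranS n p y := by
  set c : ℝ := min (1 / 2) ((2 : ℝ) ^ (-(y / (1 - y)))) with hc_def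
  have hc : 0 < c := lt_min (by norm_num) (Real.rpow_pos_of_pos two_pos _)
  filter_upwards [Ioo_mem_nhdsGT_of_mem ⟨le_refl 0, hc⟩] with p hp
  obtain ⟨hp0, hpc⟩ := hp
  have hp2 : p < 1 / 2 := lt_of_lt_of_le hpc (min_le_left _ _)
  have hp1 : p < 1 := by linarith
  -- key : p < (p/2)^y
  have hpow : p ^ (1 - y) < 2 ^ (-y : ℝ) := by
    have h1 : p < (2 : ℝ) ^ (-(y / (1 - y))) := lt_of_lt_of_le hpc (min_le_right _ _)
    have h2 : p ^ (1 - y) < ((2 : ℝ) ^ (-(y / (1 - y)))) ^ (1 - y) :=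
      Real.rpow_lt_rpow hp0.le h1 (by linarith)
    calc p ^ (1 - y) < ((2 : ℝ) ^ (-(y / (1 - y)))) ^ (1 - y) := h2
      _ = (2 : ℝ) ^ (-(y / (1 - y)) * (1 - y)) := (Real.rpow_mul (by norm_num) _ _).symm
      _ = (2 : ℝ) ^ (-y : ℝ) := by
          congr 1
          have h1y : (1:ℝ) - y ≠ 0 := by linarith
          field_simp
  have key : p < (p / 2) ^ y := by
    have hsplit : p = p ^ y * p ^ (1 - y) := by
      rw [← Real.rpow_add hp0]; norm_num
    have hp_pos : (0 : ℝ) < p ^ y := Real.rpow_pos_of_pos hp0 y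
    have h3 : p ^ y * p ^ (1 - y) < p ^ y * 2 ^ (-y : ℝ) := by
      exact (mul_lt_mul_iff_right₀ hp_pos).2 hpow
    have h4 : (p / 2) ^ y = p ^ y * 2 ^ (-y : ℝ) := by
      rw [div_eq_mul_inv, Real.mul_rpow hp0.le (by norm_num),
        Real.inv_rpow (by norm_num), Real.rpow_neg (by norm_num)]
    rw [h4]; calc p = p ^ y * p ^ (1 - y) := hsplit
      _ < p ^ y * 2 ^ (-y : ℝ) := h3
  -- sum ≥ first two terms
  have hge : ((1 - p) * p ^ (0:ℕ)) ^ y + ((1 - p) * p ^ (1:ℕ)) ^ y ≤ moranS n p y := by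
    have hsub : Finset.range 2 ⊆ Finset.range n := Finset.range_subset_range.2 hn
    have := Finset.sum_le_sum_of_subset_of_nonneg hsub
      (f := fun i => ((1 - p) * p ^ i) ^ y)
      (fun i _ _ => Real.rpow_nonneg (mul_nonneg (by linarith) (pow_nonneg hp0.le i)) y)
    unfold moranS
    calc ((1 - p) * p ^ (0:ℕ)) ^ y + ((1 - p) * p ^ (1:ℕ)) ^ y
        = ∑ i ∈ Finset.range 2, ((1 - p) * p ^ i) ^ y := by
          rw [Finset.sum_range_succ, Finset.sum_range_one]
      _ ≤ _ := this
  have h1 : 1 - p ≤ (1 - p) ^ y := by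
    calc 1 - p = (1 - p) ^ (1 : ℝ) := (Real.rpow_one _).symm
      _ ≤ (1 - p) ^ y := Real.rpow_le_rpow_of_exponent_ge (by linarith) (by linarith) hy1.le
  have h2 : (p / 2) ^ y ≤ ((1 - p) * p ^ (1:ℕ)) ^ y := by
    apply Real.rpow_le_rpow (by linarith) (by nlinarith) hy.le
  have h0 : ((1 - p) * p ^ (0:ℕ)) ^ y = (1 - p) ^ y := by norm_num
  rw [h0] at hge
  linarith

lemma moranS_lt_one (n : ℕ) {y : ℝ} (hy : 0 < y) :
    ∀ᶠ p in 𝓝[<] (1 : ℝ), moranS n p y < 1 := by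
  have hval : moranS n 1 y = 0 := by
    unfold moranS
    simp [Real.zero_rpow hy.ne']
  have hcont : Tendsto (fun p => moranS n p y) (𝓝 1) (𝓝 0) := by
    have := (moranS_continuous n hy.le).tendsto 1
    rwa [hval] at this
  have h1 : ∀ᶠ p in 𝓝 (1:ℝ), moranS n p y < 1 := hcont.eventually_lt_const one_pos
  exact eventually_nhdsWithin_of_eventually_nhds h1

/-- For fixed `n ≥ 2`, if `d : (0,1) → (0,1)` solves
`(1-p^{dn})(1-p)^d/(1-p^d) = 1`, then `d(p) → 1` as `p → 0⁺`, `d(p) → 0` as `p → 1⁻`,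
and `d` attains every value in `(0,1)`. -/
theorem geometric_dimension_limits (n : ℕ) (hn : 2 ≤ n) (d : ℝ → ℝ)
    (hd : ∀ p ∈ Set.Ioo (0:ℝ) 1, d p ∈ Set.Ioo (0:ℝ) 1 ∧
      (1 - p ^ (d p * n)) * (1 - p) ^ (d p) / (1 - p ^ (d p)) = 1) :
    Tendsto d (𝓝[>] (0:ℝ)) (𝓝 1) ∧
    Tendsto d (𝓝[<] (1:ℝ)) (𝓝 0) ∧
    ∀ y ∈ Set.Ioo (0:ℝ) 1, ∃ p ∈ Set.Ioo (0:ℝ) 1, d p = y := by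
  have hn0 : n ≠ 0 := by omega
  -- the equation in sum form
  have heq : ∀ p ∈ Set.Ioo (0:ℝ) 1, moranS n p (d p) = 1 := by
    intro p hp
    obtain ⟨⟨hd0, hd1⟩, he⟩ := hd p hp
    rw [← moranS_eq hp.1 hp.2 hd0]
    exact he
  refine ⟨?_, ?_, ?_⟩
  · -- limit at 0+
    rw [tendsto_order]
    constructor
    · intro c hc
      set c' : ℝ := max c (1 / 2) with hc'_def
      have hc'0 : 0 < c' := lt_of_lt_of_le (by norm_num) (le_max_right _ _)
      have hc'1 : c' < 1 := max_lt hc (by norm_num)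
      filter_upwards [moranS_gt_one hn hc'0 hc'1,
        Ioo_mem_nhdsGT_of_mem (show (0:ℝ) ∈ Ico (0:ℝ) 1 by constructor <;> norm_num)]
        with p hS hp
      have h1 : moranS n p (d p) < moranS n p c' := by
        rw [heq p hp]; exact hS
      have := (moranS_strictAnti hn0 hp.1 hp.2).lt_iff_gt.1 h1
      exact lt_of_le_of_lt (le_max_left _ _) this
    · intro c hc
      filter_upwards [Ioo_mem_nhdsGT_of_mem (show (0:ℝ) ∈ Ico (0:ℝ) 1 by constructor <;> norm_num)]
        with p hp
      exact lt_trans (hd p hp).1.2 hc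
  · -- limit at 1-
    rw [tendsto_order]
    constructor
    · intro c hc
      filter_upwards [Ioo_mem_nhdsLT_of_mem (show (1:ℝ) ∈ Ioc (0:ℝ) 1 by constructor <;> norm_num)]
        with p hp
      exact lt_trans hc (hd p hp).1.1
    · intro c hc
      set c' : ℝ := min c (1 / 2) with hc'_def
      have hc'0 : 0 < c' := lt_min hc (by norm_num)
      filter_upwards [moranS_lt_one n hc'0,
        Ioo_mem_nhdsLT_of_mem (show (1:ℝ) ∈ Ioc (0:ℝ) 1 by constructor <;> norm_num)]
        with p hS hp
      have h1 : moranS n p c' < moranS n p (d p) := by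
        rw [heq p hp]; exact hS
      have := (moranS_strictAnti hn0 hp.1 hp.2).lt_iff_gt.1 h1
      exact lt_of_lt_of_le this (min_le_left _ _)
  · -- surjectivity
    intro y ⟨hy0, hy1⟩
    -- find a with moranS n a y > 1, a ∈ (0,1)
    obtain ⟨a, haS, ha⟩ : ∃ a, 1 < moranS n a y ∧ a ∈ Set.Ioo (0:ℝ) 1 := by
      have h := (moranS_gt_one hn hy0 hy1).and
        (Ioo_mem_nhdsGT_of_mem (show (0:ℝ) ∈ Ico (0:ℝ) 1 by constructor <;> norm_num) :
          ∀ᶠ p in 𝓝[>] (0:ℝ), p ∈ Set.Ioo (0:ℝ) 1)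
      exact h.exists
    obtain ⟨b, hbS, hb⟩ : ∃ b, moranS n b y < 1 ∧ b ∈ Set.Ioo a 1 := by
      have h := (moranS_lt_one n hy0).and
        (Ioo_mem_nhdsLT_of_mem (show (1:ℝ) ∈ Ioc a 1 from ⟨ha.2, le_refl 1⟩) :
          ∀ᶠ p in 𝓝[<] (1:ℝ), p ∈ Set.Ioo a 1)
      exact h.exists
    have hab : a ≤ b := hb.1.le
    have hcont : ContinuousOn (fun p => moranS n p y) (Set.Icc a b) :=
      (moranS_continuous n hy0.le).continuousOn
    have hmem : (1:ℝ) ∈ Set.Icc (moranS n b y) (moranS n a y) := ⟨hbS.le, haS.le⟩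
    obtain ⟨p, hpmem, hpeq⟩ := intermediate_value_Icc' hab hcont hmem
    have hpIoo : p ∈ Set.Ioo (0:ℝ) 1 :=
      ⟨lt_of_lt_of_le ha.1 hpmem.1, lt_of_le_of_lt hpmem.2 hb.2⟩
    refine ⟨p, hpIoo, ?_⟩
    have h1 : moranS n p (d p) = moranS n p y := by
      rw [heq p hpIoo]; exact hpeq.symm
    exact (moranS_strictAnti hn0 hpIoo.1 hpIoo.2).injective h1
end

section
/- Fix n ≥ 2. For λ ∈ (0,∞), let d(λ) be the unique solution of ∑_{i=1}^n e^{−λ d} λ^{d(i−1)} / ((i−1)!)^d = 1. Then d(λ) → 1 as λ → 0⁺ and d(λ) → 0 as λ → ∞. -/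
open Set Real Filter Topology

private noncomputable def pp (l : ℝ) (i : ℕ) : ℝ :=
  Real.exp (-l) * l ^ i / (Nat.factorial i : ℝ)

private lemma pp_pos {l : ℝ} (hl : 0 < l) (i : ℕ) : 0 < pp l i := by
  unfold pp
  have : (0:ℝ) < (Nat.factorial i : ℝ) := by exact_mod_cast i.factorial_pos
  positivity

private lemma pp_le_one {l : ℝ} (hl : 0 < l) (hl1 : l ≤ 1) (i : ℕ) : pp l i ≤ 1 := by
  unfold pp
  have hf : (1:ℝ) ≤ (Nat.factorial i : ℝ) := by exact_mod_cast i.factorial_pos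
  rw [div_le_one (by linarith)]
  have h1 : Real.exp (-l) ≤ 1 := Real.exp_le_one_iff.mpr (by linarith)
  have h2 : l ^ i ≤ 1 := pow_le_one₀ hl.le hl1
  have h3 : (0:ℝ) ≤ l ^ i := pow_nonneg hl.le i
  nlinarith

private lemma term_eq {l : ℝ} (hl : 0 < l) (e : ℝ) (i : ℕ) :
    Real.exp (-(l * e)) * l ^ (e * (i:ℝ)) / ((Nat.factorial i : ℝ)) ^ e = pp l i ^ e := by
  unfold pp
  have hf : (0:ℝ) ≤ (Nat.factorial i : ℝ) := by positivity
  rw [Real.div_rpow (by positivity) hf,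
    Real.mul_rpow (Real.exp_pos _).le (by positivity),
    ← Real.exp_mul, ← Real.rpow_natCast l i, ← Real.rpow_mul hl.le, neg_mul,
    mul_comm (i:ℝ) e]

/-- For fixed `n ≥ 2`, if `d(λ)` is the unique positive solution of the
Moran equation `∑_{i=1}^n (e^{-λ} λ^{i-1}/(i-1)!)^d = 1` for the Poisson distribution,
then `d(λ) → 1` as `λ → 0⁺` and `d(λ) → 0` as `λ → ∞`. -/
theorem poisson_dimension_limits (n : ℕ) (hn : 2 ≤ n) (d : ℝ → ℝ)
    (hd : ∀ l : ℝ, 0 < l → 0 < d l ∧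
      ∑ i ∈ Finset.range n,
        Real.exp (-(l * d l)) * l ^ (d l * i) / ((Nat.factorial i : ℝ)) ^ (d l) = 1)
    (huniq : ∀ l : ℝ, 0 < l → ∀ e : ℝ, 0 < e →
      ∑ i ∈ Finset.range n,
        Real.exp (-(l * e)) * l ^ (e * i) / ((Nat.factorial i : ℝ)) ^ e = 1 → e = d l) :
    Tendsto d (𝓝[>] (0:ℝ)) (𝓝 1) ∧ Tendsto d atTop (𝓝 0) := by
  -- rewrite the equation in terms of `pp`
  have hd' : ∀ l : ℝ, 0 < l → ∑ i ∈ Finset.range n, pp l i ^ (d l) = 1 := by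
    intro l hl
    have h := (hd l hl).2
    rw [← h]
    exact Finset.sum_congr rfl fun i _ => (term_eq hl (d l) i).symm
  -- monotonicity of the sum in the exponent, when all pp ≤ 1
  have hmono : ∀ l : ℝ, 0 < l → (∀ i ∈ Finset.range n, pp l i ≤ 1) →
      ∀ e e' : ℝ, e ≤ e' →
        ∑ i ∈ Finset.range n, pp l i ^ e' ≤ ∑ i ∈ Finset.range n, pp l i ^ e := by
    intro l hl hle e e' h
    exact Finset.sum_le_sum fun i hi =>
      Real.rpow_le_rpow_of_exponent_ge (pp_pos hl i) (hle i hi) h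
  constructor
  · -- limit as λ → 0⁺
    rw [Metric.tendsto_nhdsWithin_nhds]
    intro ε hε
    set ε' : ℝ := min ε 1 / 2 with hε'def
    have hε'pos : 0 < ε' := by
      have : 0 < min ε 1 := lt_min hε one_pos
      positivity
    have hε'lt1 : ε' < 1 := by
      have : min ε 1 ≤ 1 := min_le_right _ _
      rw [hε'def]; linarith
    have hε'le : ε' ≤ ε := by
      have h1 : min ε 1 ≤ ε := min_le_left _ _
      rw [hε'def]; linarith
    refine ⟨min 1 ((1/2) ^ ((1:ℝ)/ε')), lt_min one_pos (Real.rpow_pos_of_pos (by norm_num) _), ?_⟩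
    intro x hx hdist
    have hxpos : 0 < x := hx
    rw [Real.dist_eq, sub_zero, abs_of_pos hxpos] at hdist
    have hx1 : x < 1 := lt_of_lt_of_le hdist (min_le_left _ _)
    have hxc : x < (1/2 : ℝ) ^ ((1:ℝ)/ε') := lt_of_lt_of_le hdist (min_le_right _ _)
    have hple : ∀ i ∈ Finset.range n, pp x i ≤ 1 := fun i _ => pp_le_one hxpos hx1.le i
    -- upper bound : d x < 1
    have hF1 : ∑ i ∈ Finset.range n, pp x i ^ (1:ℝ) < 1 := by
      simp only [Real.rpow_one]
      have hsum : ∑ i ∈ Finset.range n, x ^ i / (Nat.factorial i : ℝ) < Real.exp x := by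
        have h1 : ∑ i ∈ Finset.range (n+1), x ^ i / (Nat.factorial i : ℝ) ≤ Real.exp x :=
          Real.sum_le_exp_of_nonneg hxpos.le _
        have h2 := Finset.sum_range_succ (fun i => x ^ i / (Nat.factorial i : ℝ)) n
        have h3 : (0:ℝ) < x ^ n / (Nat.factorial n : ℝ) := by
          have : (0:ℝ) < (Nat.factorial n : ℝ) := by exact_mod_cast n.factorial_pos
          positivity
        rw [h2] at h1
        linarith
      have heq : ∑ i ∈ Finset.range n, pp x i
          = Real.exp (-x) * ∑ i ∈ Finset.range n, x ^ i / (Nat.factorial i : ℝ) := by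
        rw [Finset.mul_sum]
        exact Finset.sum_congr rfl fun i _ => (mul_div_assoc _ _ _)
      rw [heq]
      calc Real.exp (-x) * ∑ i ∈ Finset.range n, x ^ i / (Nat.factorial i : ℝ)
          < Real.exp (-x) * Real.exp x := by
            exact mul_lt_mul_of_pos_left hsum (Real.exp_pos _)
        _ = 1 := by rw [← Real.exp_add]; simp
    have hdx1 : d x < 1 := by
      by_contra h
      push_neg at h
      have h2 := hmono x hxpos hple 1 (d x) h
      rw [hd' x hxpos] at h2
      linarith
    -- lower bound : 1 - ε' < d x
    have hxe' : x ^ ε' < 1/2 := by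
      have h1 := Real.rpow_lt_rpow hxpos.le hxc hε'pos
      rwa [← Real.rpow_mul (by norm_num : (0:ℝ) ≤ 1/2), one_div_mul_cancel hε'pos.ne',
        Real.rpow_one] at h1
    have hxepos : 0 < x ^ ε' := Real.rpow_pos_of_pos hxpos _
    have hxs : x ^ (1 - ε') = x / x ^ ε' := by
      rw [Real.rpow_sub hxpos, Real.rpow_one]
    have h2x : 2 * x < x ^ (1 - ε') := by
      rw [hxs, lt_div_iff₀ hxepos]
      nlinarith
    have hs0 : 0 < 1 - ε' := by linarith
    have hxs1 : x ^ (1 - ε') ≤ 1 := Real.rpow_le_one hxpos.le hx1.le hs0.le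
    have hxspos : 0 < x ^ (1 - ε') := Real.rpow_pos_of_pos hxpos _
    have hxslt : x * (1 - ε') < 1 := by nlinarith
    have hA : 1 - x * (1 - ε') ≤ Real.exp (-(x * (1 - ε'))) := by
      have := Real.add_one_le_exp (-(x * (1 - ε')))
      linarith
    have hC : Real.exp (x * (1 - ε')) < 1 + x ^ (1 - ε') := by
      have h0 : 0 < 1 - x * (1 - ε') := by linarith
      have hmul : (1 - x * (1 - ε')) * Real.exp (x * (1 - ε')) ≤ 1 := by
        have := mul_le_mul_of_nonneg_right hA (Real.exp_pos (x * (1 - ε'))).le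
        rwa [← Real.exp_add, neg_add_cancel, Real.exp_zero] at this
      have hE : Real.exp (x * (1 - ε')) ≤ 1 / (1 - x * (1 - ε')) := by
        rw [le_div_iff₀ h0]
        linarith [hmul]
      have ha : x * (1 - ε') ≤ x := by nlinarith
      have hb : x * (1 - ε') * x ^ (1 - ε') ≤ x := by
        have := mul_le_mul ha hxs1 hxspos.le hxpos.le
        linarith
      have hD : 1 / (1 - x * (1 - ε')) < 1 + x ^ (1 - ε') := by
        rw [div_lt_iff₀ h0]
        nlinarith [h2x, ha, hb]
      linarith
    have hkey : 1 < Real.exp (-(x * (1 - ε'))) * (1 + x ^ (1 - ε')) := by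
      have := mul_lt_mul_of_pos_left hC (Real.exp_pos (-(x * (1 - ε'))))
      rwa [← Real.exp_add, neg_add_cancel, Real.exp_zero] at this
    have hFs : 1 < ∑ i ∈ Finset.range n, pp x i ^ (1 - ε') := by
      have h01 : ({0,1} : Finset ℕ) ⊆ Finset.range n := by
        intro i hi
        simp only [Finset.mem_insert, Finset.mem_singleton] at hi
        rcases hi with rfl | rfl <;> (rw [Finset.mem_range]; omega)
      have hsub : ∑ i ∈ ({0,1} : Finset ℕ), pp x i ^ (1 - ε')
          ≤ ∑ i ∈ Finset.range n, pp x i ^ (1 - ε') :=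
        Finset.sum_le_sum_of_subset_of_nonneg h01
          (fun i _ _ => Real.rpow_nonneg (pp_pos hxpos i).le _)
      have hpair : ∑ i ∈ ({0,1} : Finset ℕ), pp x i ^ (1 - ε')
          = Real.exp (-(x * (1 - ε'))) * (1 + x ^ (1 - ε')) := by
        rw [Finset.sum_pair (by norm_num : (0:ℕ) ≠ 1)]
        have hp0 : pp x 0 = Real.exp (-x) := by unfold pp; simp
        have hp1 : pp x 1 = Real.exp (-x) * x := by unfold pp; simp
        rw [hp0, hp1, Real.mul_rpow (Real.exp_pos _).le hxpos.le,
          ← Real.exp_mul, neg_mul]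
        ring
      rw [hpair] at hsub
      linarith
    have hdxl : 1 - ε' < d x := by
      by_contra h
      push_neg at h
      have h2 := hmono x hxpos hple (d x) (1 - ε') h
      rw [hd' x hxpos] at h2
      linarith
    rw [Real.dist_eq, abs_lt]
    constructor <;> linarith
  · -- limit as λ → ∞
    rw [Metric.tendsto_nhds]
    intro ε hε
    have hnpos : (0:ℝ) < (n:ℝ) := by exact_mod_cast lt_of_lt_of_le (by norm_num) hn
    have hcpos : (0:ℝ) < 1/(2*(n:ℝ)) := by positivity
    set δ0 : ℝ := min (1/2) ((1/(2*(n:ℝ))) ^ ((1:ℝ)/ε)) with hδ0def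
    have hδ0pos : 0 < δ0 := lt_min (by norm_num) (Real.rpow_pos_of_pos hcpos _)
    have hg : Tendsto (fun x : ℝ => x ^ (n-1) * Real.exp (-x)) atTop (𝓝 0) :=
      tendsto_pow_mul_exp_neg_atTop_nhds_zero (n-1)
    filter_upwards [hg.eventually_lt_const hδ0pos, eventually_ge_atTop (1:ℝ)] with x hgx hx1
    have hxpos : 0 < x := lt_of_lt_of_le one_pos hx1
    have hgnn : 0 ≤ x ^ (n-1) * Real.exp (-x) := by positivity
    have hpg : ∀ i ∈ Finset.range n, pp x i ≤ x ^ (n-1) * Real.exp (-x) := by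
      intro i hi
      have hile : i ≤ n - 1 := by rw [Finset.mem_range] at hi; omega
      have hf : (1:ℝ) ≤ (Nat.factorial i : ℝ) := by exact_mod_cast i.factorial_pos
      have h1 : pp x i ≤ Real.exp (-x) * x ^ i := by
        unfold pp
        exact div_le_self (by positivity) hf
      have h2 : x ^ i ≤ x ^ (n-1) := pow_le_pow_right₀ hx1 hile
      calc pp x i ≤ Real.exp (-x) * x ^ i := h1
        _ ≤ Real.exp (-x) * x ^ (n-1) := by
            exact mul_le_mul_of_nonneg_left h2 (Real.exp_pos _).le
        _ = x ^ (n-1) * Real.exp (-x) := by ring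
    have hple : ∀ i ∈ Finset.range n, pp x i ≤ 1 := by
      intro i hi
      have := hpg i hi
      have h2 : δ0 ≤ 1/2 := min_le_left _ _
      linarith
    -- each term of the sum at exponent ε is < 1/(2n)
    have hterm : ∀ i ∈ Finset.range n, pp x i ^ ε < 1/(2*(n:ℝ)) := by
      intro i hi
      have h1 : pp x i ^ ε ≤ (x ^ (n-1) * Real.exp (-x)) ^ ε :=
        Real.rpow_le_rpow (pp_pos hxpos i).le (hpg i hi) hε.le
      have h2 : x ^ (n-1) * Real.exp (-x) < (1/(2*(n:ℝ))) ^ ((1:ℝ)/ε) :=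
        lt_of_lt_of_le hgx (min_le_right _ _)
      have h3 : (x ^ (n-1) * Real.exp (-x)) ^ ε < ((1/(2*(n:ℝ))) ^ ((1:ℝ)/ε)) ^ ε :=
        Real.rpow_lt_rpow hgnn h2 hε
      have h4 : ((1/(2*(n:ℝ))) ^ ((1:ℝ)/ε)) ^ ε = 1/(2*(n:ℝ)) := by
        rw [← Real.rpow_mul hcpos.le, one_div_mul_cancel hε.ne', Real.rpow_one]
      rw [h4] at h3
      linarith
    have hFε : ∑ i ∈ Finset.range n, pp x i ^ ε < 1 := by
      have hne : (Finset.range n).Nonempty := by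
        rw [Finset.nonempty_range_iff]; omega
      have hlt : ∑ i ∈ Finset.range n, pp x i ^ ε
          < ∑ _i ∈ Finset.range n, 1/(2*(n:ℝ)) :=
        Finset.sum_lt_sum_of_nonempty hne hterm
      have hconst : ∑ _i ∈ Finset.range n, 1/(2*(n:ℝ)) = 1/2 := by
        rw [Finset.sum_const, Finset.card_range, nsmul_eq_mul]
        field_simp
      rw [hconst] at hlt
      linarith
    have hdlt : d x < ε := by
      by_contra h
      push_neg at h
      have h2 := hmono x hxpos hple ε (d x) h
      rw [hd' x hxpos] at h2
      linarith
    rw [Real.dist_eq, sub_zero, abs_of_pos (hd x hxpos).1]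
    exact hdlt
end

section
/- Fix n ≥ 2. For s > 1, let d(s) be the unique solution of ζ(s)^{−d} ∑_{i=1}^n i^{−sd} = 1. Then d(s) → 1 as s → ∞, and for every fixed d > 0, ζ(s)^{−d} ∑_{i=1}^n i^{−sd} → 0 as s → 1⁺ (so d(s) → 0 as s → 1⁺). -/
open Set Real Filter Topology

private lemma zdl_summable_shift (s : ℝ) (hs : 1 < s) :
    Summable (fun k : ℕ => ((k : ℝ) + 1) ^ (-s)) := by
  have h : Summable (fun n : ℕ => (n : ℝ) ^ (-s)) :=
    Real.summable_nat_rpow.mpr (by linarith)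
  have h2 := (summable_nat_add_iff 1).mpr h
  refine h2.congr fun k => ?_
  push_cast
  ring_nf

private lemma zdl_hasSum_telescope :
    HasSum (fun k : ℕ => 1 / (((k : ℝ) + 1) * ((k : ℝ) + 2))) 1 := by
  have h0 : ∀ k : ℕ, (0:ℝ) ≤ 1 / (((k : ℝ) + 1) * ((k : ℝ) + 2)) := fun k => by positivity
  rw [hasSum_iff_tendsto_nat_of_nonneg h0]
  have key : ∀ N : ℕ, ∑ k ∈ Finset.range N, 1 / (((k : ℝ) + 1) * ((k : ℝ) + 2))
      = 1 - 1 / ((N : ℝ) + 1) := by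
    intro N
    rw [show (1:ℝ) - 1/((N:ℝ)+1)
        = (fun k : ℕ => 1/((k:ℝ)+1)) 0 - (fun k : ℕ => 1/((k:ℝ)+1)) N by norm_num,
      ← Finset.sum_range_sub' (f := fun k : ℕ => 1 / ((k : ℝ) + 1)) N]
    apply Finset.sum_congr rfl
    intro k _
    push_cast
    have h1 : ((k:ℝ) + 1) ≠ 0 := by positivity
    have h2 : ((k:ℝ) + 2) ≠ 0 := by positivity
    have h3 : ((k:ℝ)+1+1) = (k:ℝ)+2 := by ring
    rw [h3, div_sub_div _ _ h1 h2, div_eq_div_iff (by positivity) (by positivity)]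
    ring
  simp only [key]
  have : Tendsto (fun N : ℕ => 1 - 1 / ((N : ℝ) + 1)) atTop (𝓝 (1 - 0)) :=
    tendsto_const_nhds.sub tendsto_one_div_add_atTop_nhds_zero_nat
  simpa using this

private lemma zdl_tail_bound {s : ℝ} (hs : 2 ≤ s) :
    (∑' k : ℕ, ((k : ℝ) + 1) ^ (-s)) ≤ 1 + (2:ℝ) ^ ((2:ℝ) - s) := by
  have hs1 : (1:ℝ) < s := by linarith
  have hsum := zdl_summable_shift s hs1
  have hpt : ∀ k : ℕ, ((((k+1) : ℕ) : ℝ) + 1) ^ (-s)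
      ≤ (2:ℝ) ^ ((2:ℝ) - s) * (1 / (((k : ℝ) + 1) * ((k : ℝ) + 2))) := by
    intro k
    have hk : (0:ℝ) ≤ (k:ℝ) := Nat.cast_nonneg k
    have hb2 : (2:ℝ) ≤ (k:ℝ) + 2 := by linarith
    have hbpos : (0:ℝ) < (k:ℝ) + 2 := by positivity
    have e1 : ((((k+1) : ℕ) : ℝ) + 1) = (k:ℝ) + 2 := by push_cast; ring
    rw [e1]
    have e2 : ((k:ℝ)+2) ^ (-s) = ((k:ℝ)+2) ^ ((2:ℝ) - s) * ((k:ℝ)+2) ^ (-2 : ℝ) := by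
      rw [← Real.rpow_add hbpos]; congr 1; ring
    rw [e2]
    have h3 : ((k:ℝ)+2) ^ ((2:ℝ)-s) ≤ (2:ℝ) ^ ((2:ℝ)-s) :=
      Real.rpow_le_rpow_of_nonpos (by norm_num) hb2 (by linarith)
    have h4 : ((k:ℝ)+2) ^ (-2:ℝ) ≤ 1 / (((k:ℝ)+1)*((k:ℝ)+2)) := by
      rw [show (-2:ℝ) = -((2:ℕ):ℝ) by norm_num, Real.rpow_neg hbpos.le, Real.rpow_natCast,
        inv_eq_one_div, div_le_div_iff₀ (by positivity) (by positivity)]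
      nlinarith
    exact mul_le_mul h3 h4 (Real.rpow_nonneg hbpos.le _) (Real.rpow_nonneg (by norm_num) _)
  rw [Summable.tsum_eq_zero_add hsum]
  have h0 : (((0:ℕ):ℝ) + 1) ^ (-s) = (1:ℝ) := by norm_num
  rw [h0]
  gcongr
  calc (∑' k : ℕ, ((((k+1) : ℕ) : ℝ) + 1) ^ (-s))
      ≤ ∑' k : ℕ, (2:ℝ) ^ ((2:ℝ) - s) * (1 / (((k : ℝ) + 1) * ((k : ℝ) + 2))) :=
        (hsum.comp_injective (add_left_injective 1)).tsum_le_tsum hpt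
          (zdl_hasSum_telescope.mul_left _).summable
    _ = (2:ℝ) ^ ((2:ℝ) - s) * 1 := (zdl_hasSum_telescope.mul_left _).tsum_eq
    _ = (2:ℝ) ^ ((2:ℝ) - s) := mul_one _


/-- For fixed `n ≥ 2` and the zeta distribution with parameter `s > 1`
(`Z s = ∑_{k≥1} k^{-s}`), if `d(s)` is the unique positive solution of
`Z(s)^{-d} ∑_{i=1}^n i^{-sd} = 1`, then `d(s) → 1` as `s → ∞`, and for every fixed
`d > 0` the left-hand side tends to `0` as `s → 1⁺` (so `d(s) → 0` as `s → 1⁺`). -/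
theorem zeta_dimension_limits (n : ℕ) (hn : 2 ≤ n)
    (Z : ℝ → ℝ) (hZ : ∀ s : ℝ, Z s = ∑' k : ℕ, ((k : ℝ) + 1) ^ (-s))
    (d : ℝ → ℝ)
    (hd : ∀ s : ℝ, 1 < s → 0 < d s ∧
      Z s ^ (-(d s)) * ∑ i ∈ Finset.range n, ((i : ℝ) + 1) ^ (-(s * d s)) = 1)
    (huniq : ∀ s : ℝ, 1 < s → ∀ e : ℝ, 0 < e →
      Z s ^ (-e) * ∑ i ∈ Finset.range n, ((i : ℝ) + 1) ^ (-(s * e)) = 1 → e = d s) :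
    Tendsto d atTop (𝓝 1) ∧
    ∀ c : ℝ, 0 < c →
      Tendsto (fun s : ℝ => Z s ^ (-c) * ∑ i ∈ Finset.range n, ((i : ℝ) + 1) ^ (-(s * c)))
        (𝓝[>] (1:ℝ)) (𝓝 0) := by
  have hsum : ∀ s : ℝ, 1 < s → Summable (fun k : ℕ => ((k : ℝ) + 1) ^ (-s)) :=
    fun s hs => zdl_summable_shift s hs
  have hZ1 : ∀ s : ℝ, 1 < s → 1 ≤ Z s := by
    intro s hs
    rw [hZ s]
    have := (hsum s hs).le_tsum 0 (fun j _ => Real.rpow_nonneg (by positivity) _)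
    simpa using this
  have hZpos : ∀ s : ℝ, 1 < s → (0:ℝ) < Z s := fun s hs => lt_of_lt_of_le one_pos (hZ1 s hs)
  -- upper bound d s ≤ 1
  have hdle : ∀ s : ℝ, 1 < s → d s ≤ 1 := by
    intro s hs
    by_contra hgt
    push_neg at hgt
    have hds := (hd s hs).1
    have heq := (hd s hs).2
    have hspos : (0:ℝ) < s := by linarith
    have step1 : (∑ i ∈ Finset.range n, ((i : ℝ) + 1) ^ (-(s * d s)))
        ≤ ∑ i ∈ Finset.range n, ((i : ℝ) + 1) ^ (-s) := by
      apply Finset.sum_le_sum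
      intro i _
      apply Real.rpow_le_rpow_of_exponent_le (by linarith [Nat.cast_nonneg (α := ℝ) i])
      have : s ≤ s * d s := le_mul_of_one_le_right hspos.le hgt.le
      linarith
    have step2 : (∑ i ∈ Finset.range n, ((i : ℝ) + 1) ^ (-s)) < Z s := by
      rw [hZ s]
      have hle := (hsum s hs).sum_le_tsum (Finset.range (n+1))
        (fun i _ => Real.rpow_nonneg (by positivity) _)
      rw [Finset.sum_range_succ] at hle
      have hpos : (0:ℝ) < ((n : ℝ) + 1) ^ (-s) := Real.rpow_pos_of_pos (by positivity) _
      linarith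
    have step3 : Z s ≤ Z s ^ (d s) := by
      nth_rewrite 1 [← Real.rpow_one (Z s)]
      exact Real.rpow_le_rpow_of_exponent_le (hZ1 s hs) hgt.le
    have hinv : (0:ℝ) < Z s ^ (-(d s)) := Real.rpow_pos_of_pos (hZpos s hs) _
    have hlt : Z s ^ (-(d s)) * (∑ i ∈ Finset.range n, ((i : ℝ) + 1) ^ (-(s * d s)))
        < Z s ^ (-(d s)) * Z s ^ (d s) :=
      mul_lt_mul_of_pos_left (lt_of_le_of_lt step1 (lt_of_lt_of_le step2 step3)) hinv
    rw [← Real.rpow_add (hZpos s hs), neg_add_cancel, Real.rpow_zero, heq] at hlt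
    exact lt_irrefl 1 hlt
  -- lower bound for s ≥ 2
  have hdge : ∀ s : ℝ, 2 ≤ s → 1 - 2 / s ≤ d s := by
    intro s hs2
    have hs : (1:ℝ) < s := by linarith
    have hds := (hd s hs).1
    have heq := (hd s hs).2
    have hSZ : (∑ i ∈ Finset.range n, ((i : ℝ) + 1) ^ (-(s * d s))) = Z s ^ (d s) := by
      have hne : Z s ^ (d s) ≠ 0 := (Real.rpow_pos_of_pos (hZpos s hs) _).ne'
      rw [Real.rpow_neg (hZpos s hs).le] at heq
      exact ((inv_mul_eq_one₀ hne).mp heq).symm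
    have low : 1 + (2:ℝ) ^ (-(s * d s)) ≤ Z s ^ (d s) := by
      rw [← hSZ]
      have hsub : Finset.range 2 ⊆ Finset.range n := Finset.range_subset_range.mpr hn
      have hmono := Finset.sum_le_sum_of_subset_of_nonneg
        (f := fun i : ℕ => ((i:ℝ)+1) ^ (-(s * d s))) hsub
        (fun i _ _ => Real.rpow_nonneg (by positivity) (-(s * d s)))
      calc 1 + (2:ℝ) ^ (-(s * d s))
          = ∑ i ∈ Finset.range 2, ((i:ℝ)+1) ^ (-(s * d s)) := by
            rw [Finset.sum_range_succ, Finset.sum_range_one]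
            norm_num
        _ ≤ _ := hmono
    have up : Z s ^ (d s) ≤ 1 + (2:ℝ) ^ ((2:ℝ) - s) := by
      calc Z s ^ (d s) ≤ Z s ^ (1:ℝ) :=
            Real.rpow_le_rpow_of_exponent_le (hZ1 s hs) (hdle s hs)
        _ = Z s := Real.rpow_one _
        _ ≤ 1 + (2:ℝ) ^ ((2:ℝ) - s) := by rw [hZ s]; exact zdl_tail_bound hs2
    have key : (2:ℝ) ^ (-(s * d s)) ≤ (2:ℝ) ^ ((2:ℝ) - s) := by linarith
    have hexp : -(s * d s) ≤ 2 - s := (Real.rpow_le_rpow_left_iff (by norm_num)).mp key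
    have hs0 : (0:ℝ) < s := by linarith
    have hmul : s - 2 ≤ s * d s := by linarith
    calc 1 - 2/s = (s - 2)/s := by field_simp
      _ ≤ d s := by rw [div_le_iff₀ hs0, mul_comm]; exact hmul
  constructor
  · apply tendsto_of_tendsto_of_tendsto_of_le_of_le' (g := fun s : ℝ => 1 - 2 / s)
      (h := fun _ : ℝ => (1:ℝ))
    · have h2 : Tendsto (fun s : ℝ => 2 / s) atTop (𝓝 (0:ℝ)) :=
        tendsto_const_nhds.div_atTop tendsto_id
      have h3 : Tendsto (fun s : ℝ => 1 - 2 / s) atTop (𝓝 (1 - 0)) :=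
        (tendsto_const_nhds (x := (1:ℝ))).sub h2
      simpa using h3
    · exact tendsto_const_nhds
    · filter_upwards [eventually_ge_atTop (2:ℝ)] with s hs using hdge s hs
    · filter_upwards [eventually_ge_atTop (2:ℝ)] with s hs using hdle s (by linarith)
  · intro c hc
    have hZtop : Tendsto Z (𝓝[>] (1:ℝ)) atTop := by
      rw [tendsto_atTop]
      intro M
      obtain ⟨N, hN⟩ := (Real.tendsto_sum_range_one_div_nat_succ_atTop.eventually_ge_atTop
        (M+1)).exists
      have hca : ∀ a : ℝ, 0 < a → Continuous (fun s : ℝ => a ^ (-s)) := by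
        intro a ha
        have hfe : (fun s : ℝ => a ^ (-s)) = fun s => Real.exp (Real.log a * (-s)) := by
          funext s; rw [Real.rpow_def_of_pos ha]
        rw [hfe]
        exact Real.continuous_exp.comp (continuous_const.mul continuous_neg)
      have hcont : ContinuousAt (fun s : ℝ => ∑ k ∈ Finset.range N, ((k:ℝ)+1)^(-s)) 1 :=
        (continuous_finset_sum _ (fun k _ => hca _ (by positivity))).continuousAt
      have hg1 : M < ∑ k ∈ Finset.range N, ((k:ℝ)+1)^(-(1:ℝ)) := by
        simp only [Real.rpow_neg_one] at *
        simp only [one_div] at hN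
        linarith
      have hev : ∀ᶠ s in 𝓝 (1:ℝ), M < ∑ k ∈ Finset.range N, ((k:ℝ)+1)^(-s) :=
        hcont.eventually (eventually_gt_nhds hg1)
      filter_upwards [hev.filter_mono nhdsWithin_le_nhds, self_mem_nhdsWithin] with s hMs hs
      have hs1 : (1:ℝ) < s := hs
      rw [hZ s]
      have := (hsum s hs1).sum_le_tsum (Finset.range N)
        (fun i _ => Real.rpow_nonneg (by positivity) _)
      linarith
    have h1 : Tendsto (fun s => Z s ^ (-c)) (𝓝[>] (1:ℝ)) (𝓝 0) :=
      (tendsto_rpow_neg_atTop hc).comp hZtop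
    have h2 : Tendsto (fun s => Z s ^ (-c) * (n:ℝ)) (𝓝[>] (1:ℝ)) (𝓝 0) := by
      simpa using h1.mul_const (n:ℝ)
    have hZnn : ∀ s : ℝ, 0 ≤ Z s := by
      intro s
      rw [hZ s]
      exact tsum_nonneg fun k => Real.rpow_nonneg (by positivity) _
    apply tendsto_of_tendsto_of_tendsto_of_le_of_le' tendsto_const_nhds h2
    · filter_upwards [self_mem_nhdsWithin] with s _
      exact mul_nonneg (Real.rpow_nonneg (hZnn s) _)
        (Finset.sum_nonneg fun i _ => Real.rpow_nonneg (by positivity) _)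
    · filter_upwards [self_mem_nhdsWithin] with s hs
      have hs1 : (1:ℝ) < s := hs
      apply mul_le_mul_of_nonneg_left _ (Real.rpow_nonneg (hZnn s) _)
      calc ∑ i ∈ Finset.range n, ((i:ℝ)+1)^(-(s*c))
          ≤ ∑ i ∈ Finset.range n, (1:ℝ) :=
            Finset.sum_le_sum fun i _ => Real.rpow_le_one_of_one_le_of_nonpos
              (by linarith [Nat.cast_nonneg (α := ℝ) i])
              (neg_nonpos.mpr (mul_nonneg (by linarith) hc.le))
        _ = n := by simp
end

section
/- Let (p_i) be a probability distribution supported on ℕ, π the induced coding map, and for x ∈ [0,1) let f(x,n) = lim_{i→∞} (1/i)·#{ j ≤ i : (π^{−1}(x))_j = n } be the frequency of digit n, when the limit exists. Then for Lebesgue-almost every x ∈ [0,1) and every n ∈ ℕ, f(x,n) exists and equals p_n. -/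
open Set MeasureTheory Filter Topology

namespace DigitFreq14



variable {p phat : ℕ → ℝ}

section Basic
variable (hp : ∀ i, p i ∈ Set.Ioo (0:ℝ) 1) (hsum : HasSum p 1)
  (hphat : ∀ n, phat n = ∑ i ∈ Finset.range n, p i)
include hp hsum hphat
set_option linter.unusedSectionVars false

theorem phat_succ (n : ℕ) : phat (n+1) = phat n + p n := by
  rw [hphat, hphat, Finset.sum_range_succ]

theorem phat_nonneg (n : ℕ) : 0 ≤ phat n := by
  rw [hphat]; exact Finset.sum_nonneg fun i _ => (hp i).1.le

theorem phat_le_one (n : ℕ) : phat n ≤ 1 := by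
  rw [hphat]; exact sum_le_hasSum _ (fun i _ => (hp i).1.le) hsum

theorem phat_lt_one (n : ℕ) : phat n < 1 := by
  have h := phat_le_one hp hsum hphat (n+1)
  rw [phat_succ hp hsum hphat] at h
  linarith [(hp n).1]

theorem phat_mono {m n : ℕ} (h : m ≤ n) : phat m ≤ phat n := by
  rw [hphat, hphat]
  exact Finset.sum_le_sum_of_subset_of_nonneg
    (Finset.range_subset_range.2 h) (fun i _ _ => (hp i).1.le)

theorem phat_add_le {m n : ℕ} (h : m < n) : phat m + p m ≤ phat n := by
  rw [← phat_succ hp hsum hphat]; exact phat_mono hp hsum hphat h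

end Basic

/-- The tail terms of the series defining `π`. -/
def F (p phat : ℕ → ℝ) (a : ℕ → ℕ) (j : ℕ) : ℝ :=
  (∏ i ∈ Finset.range (j+1), p (a i)) * phat (a (j+1))

section Pi

variable (hp : ∀ i, p i ∈ Set.Ioo (0:ℝ) 1) (hsum : HasSum p 1)
  (hphat : ∀ n, phat n = ∑ i ∈ Finset.range n, p i)
  {π : (ℕ → ℕ) → ℝ}
  (hπ : ∀ a : ℕ → ℕ, π a = phat (a 0) +
      ∑' j : ℕ, (∏ i ∈ Finset.range (j + 1), p (a i)) * phat (a (j + 1)))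
include hp hsum hphat
set_option linter.unusedSectionVars false

theorem prod_nonneg' (a : ℕ → ℕ) (k : ℕ) : 0 ≤ ∏ i ∈ Finset.range k, p (a i) :=
  Finset.prod_nonneg fun i _ => (hp (a i)).1.le

theorem F_nonneg (a : ℕ → ℕ) (j : ℕ) : 0 ≤ F p phat a j :=
  mul_nonneg (prod_nonneg' hp hsum hphat a _) (phat_nonneg hp hsum hphat _)

theorem F_le (a : ℕ → ℕ) (j : ℕ) :
    F p phat a j ≤ (∏ i ∈ Finset.range (j+1), p (a i)) -
      ∏ i ∈ Finset.range (j+2), p (a i) := by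
  have h1 : (∏ i ∈ Finset.range (j+2), p (a i)) =
      (∏ i ∈ Finset.range (j+1), p (a i)) * p (a (j+1)) := Finset.prod_range_succ _ _
  have h2 : phat (a (j+1)) ≤ 1 - p (a (j+1)) := by
    have := phat_le_one hp hsum hphat (a (j+1) + 1)
    rw [phat_succ hp hsum hphat] at this; linarith
  have h3 := prod_nonneg' hp hsum hphat a (j+1)
  have h4 := mul_le_mul_of_nonneg_left h2 h3
  rw [h1]; unfold F; nlinarith
  
theorem sum_range_F_le (a : ℕ → ℕ) (J : ℕ) :
    ∑ j ∈ Finset.range J, F p phat a j ≤ p (a 0) := by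
  calc ∑ j ∈ Finset.range J, F p phat a j
      ≤ ∑ j ∈ Finset.range J, ((∏ i ∈ Finset.range (j+1), p (a i)) -
          ∏ i ∈ Finset.range (j+2), p (a i)) :=
        Finset.sum_le_sum fun j _ => F_le hp hsum hphat a j
    _ = (∏ i ∈ Finset.range 1, p (a i)) - ∏ i ∈ Finset.range (J+1), p (a i) :=
        Finset.sum_range_sub' (fun j => ∏ i ∈ Finset.range (j+1), p (a i)) J
    _ ≤ ∏ i ∈ Finset.range 1, p (a i) := by
        linarith [prod_nonneg' hp hsum hphat a (J+1)]
    _ = p (a 0) := by simp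

theorem summable_F (a : ℕ → ℕ) : Summable (F p phat a) :=
  summable_of_sum_range_le (F_nonneg hp hsum hphat a) (sum_range_F_le hp hsum hphat a)

include hπ

theorem pi_eq (a : ℕ → ℕ) : π a = phat (a 0) + ∑' j, F p phat a j := hπ a

theorem pi_ge (a : ℕ → ℕ) : phat (a 0) ≤ π a := by
  rw [pi_eq hp hsum hphat hπ]
  have : (0:ℝ) ≤ ∑' j, F p phat a j := tsum_nonneg (F_nonneg hp hsum hphat a)
  linarith

theorem pi_le (a : ℕ → ℕ) : π a ≤ phat (a 0) + p (a 0) := by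
  rw [pi_eq hp hsum hphat hπ]
  have := Real.tsum_le_of_sum_range_le (F_nonneg hp hsum hphat a)
    (sum_range_F_le hp hsum hphat a)
  linarith

theorem pi_rec (a : ℕ → ℕ) :
    π a = phat (a 0) + p (a 0) * π (fun i => a (i+1)) := by
  have hb := pi_eq hp hsum hphat hπ (fun i => a (i+1))
  have h0 : F p phat a 0 = p (a 0) * phat (a 1) := by simp [F]
  have hs : ∀ j, F p phat a (j+1) = p (a 0) * F p phat (fun i => a (i+1)) j := by
    intro j
    show (∏ i ∈ Finset.range (j+1+1), p (a i)) * phat (a (j+2)) = _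
    rw [Finset.prod_range_succ']
    unfold F
    ring
  rw [pi_eq hp hsum hphat hπ a, Summable.tsum_eq_zero_add (summable_F hp hsum hphat a), h0,
    tsum_congr hs, tsum_mul_left, hb]
  ring

theorem pi_lt (a : ℕ → ℕ) : π a < phat (a 0) + p (a 0) := by
  rw [pi_rec hp hsum hphat hπ]
  have h1 : π (fun i => a (i+1)) ≤ phat (a 1) + p (a 1) :=
    pi_le hp hsum hphat hπ _
  have h2 : phat (a 1) + p (a 1) < 1 := by
    rw [← phat_succ hp hsum hphat]; exact phat_lt_one hp hsum hphat _
  have h3 := (hp (a 0)).1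
  nlinarith

theorem pi_mem (a : ℕ → ℕ) : π a ∈ Set.Ico (phat (a 0)) (phat (a 0) + p (a 0)) :=
  ⟨pi_ge hp hsum hphat hπ a, pi_lt hp hsum hphat hπ a⟩

theorem pi_mem01 (a : ℕ → ℕ) : π a ∈ Set.Ico (0:ℝ) 1 := by
  constructor
  · exact le_trans (phat_nonneg hp hsum hphat _) (pi_ge hp hsum hphat hπ a)
  · calc π a < phat (a 0) + p (a 0) := pi_lt hp hsum hphat hπ a
      _ = phat (a 0 + 1) := (phat_succ hp hsum hphat _).symm
      _ < 1 := phat_lt_one hp hsum hphat _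

theorem pi_zero_inj {a b : ℕ → ℕ} (h : π a = π b) : a 0 = b 0 := by
  by_contra hne
  have key : ∀ u v : ℕ → ℕ, u 0 < v 0 → π u < π v := by
    intro u v huv
    calc π u < phat (u 0) + p (u 0) := pi_lt hp hsum hphat hπ u
      _ ≤ phat (v 0) := phat_add_le hp hsum hphat huv
      _ ≤ π v := pi_ge hp hsum hphat hπ v
  rcases Nat.lt_or_ge (a 0) (b 0) with hlt | hge
  · exact absurd h (ne_of_lt (key a b hlt))
  · have : b 0 < a 0 := lt_of_le_of_ne hge (Ne.symm hne)
    exact absurd h.symm (ne_of_lt (key b a this))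

theorem pi_inj {a b : ℕ → ℕ} (h : π a = π b) : a = b := by
  funext i
  induction i using Nat.rec generalizing a b with
  | zero => exact pi_zero_inj hp hsum hphat hπ h
  | succ i ih =>
    have h0 : a 0 = b 0 := pi_zero_inj hp hsum hphat hπ h
    have ha := pi_rec hp hsum hphat hπ a
    have hb := pi_rec hp hsum hphat hπ b
    have hps : p (a 0) ≠ 0 := ne_of_gt (hp (a 0)).1
    have : π (fun i => a (i+1)) = π (fun i => b (i+1)) := by
      rw [ha, hb, h0] at h
      rw [h0] at hps
      exact mul_left_cancel₀ hps (add_left_cancel h)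
    exact ih this

end Pi




/-- Prepend a digit to a sequence. -/
def cns (m : ℕ) (a : ℕ → ℕ) : ℕ → ℕ := fun i => Nat.casesOn i m a

@[simp] theorem cns_zero (m : ℕ) (a : ℕ → ℕ) : cns m a 0 = m := rfl
@[simp] theorem cns_succ (m : ℕ) (a : ℕ → ℕ) (i : ℕ) : cns m a (i+1) = a i := rfl

variable {p phat : ℕ → ℝ} {π : (ℕ → ℕ) → ℝ} {dig : ℝ → ℕ → ℕ}

section Dig
variable (hp : ∀ i, p i ∈ Set.Ioo (0:ℝ) 1) (hsum : HasSum p 1)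
  (hphat : ∀ n, phat n = ∑ i ∈ Finset.range n, p i)
  (hπ : ∀ a : ℕ → ℕ, π a = phat (a 0) +
      ∑' j : ℕ, (∏ i ∈ Finset.range (j + 1), p (a i)) * phat (a (j + 1)))
  (hdig : ∀ x ∈ Set.Ico (0:ℝ) 1, π (dig x) = x)
include hp hsum hphat hπ hdig
set_option linter.unusedSectionVars false

theorem pi_cons (m : ℕ) (a : ℕ → ℕ) : π (cns m a) = phat m + p m * π a := by
  have h := pi_rec hp hsum hphat hπ (cns m a)
  simpa [cns] using h

theorem T_mem {y : ℝ} (hy : y ∈ Set.Ico (0:ℝ) 1) (m : ℕ) :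
    phat m + p m * y ∈ Set.Ico (phat m) (phat m + p m) := by
  obtain ⟨hy0, hy1⟩ := hy
  have := (hp m).1
  constructor
  · nlinarith
  · nlinarith

theorem T_mem01 {y : ℝ} (hy : y ∈ Set.Ico (0:ℝ) 1) (m : ℕ) :
    phat m + p m * y ∈ Set.Ico (0:ℝ) 1 := by
  obtain ⟨h1, h2⟩ := T_mem hp hsum hphat hπ hdig hy m
  constructor
  · linarith [phat_nonneg hp hsum hphat m]
  · have h3 : phat m + p m < 1 := by
      rw [← phat_succ hp hsum hphat]; exact phat_lt_one hp hsum hphat _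
    linarith

theorem dig_T {y : ℝ} (hy : y ∈ Set.Ico (0:ℝ) 1) (m : ℕ) :
    dig (phat m + p m * y) = cns m (dig y) := by
  apply pi_inj hp hsum hphat hπ
  rw [hdig _ (T_mem01 hp hsum hphat hπ hdig hy m), pi_cons hp hsum hphat hπ hdig,
    hdig _ hy]

theorem dig0_mem {x : ℝ} (hx : x ∈ Set.Ico (0:ℝ) 1) :
    x ∈ Set.Ico (phat (dig x 0)) (phat (dig x 0) + p (dig x 0)) := by
  have := pi_mem hp hsum hphat hπ (dig x)
  rwa [hdig x hx] at this

theorem interval_unique {x : ℝ} {m l : ℕ}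
    (h1 : x ∈ Set.Ico (phat m) (phat m + p m))
    (h2 : x ∈ Set.Ico (phat l) (phat l + p l)) : m = l := by
  by_contra hne
  rcases Nat.lt_or_ge m l with h | h
  · have := phat_add_le hp hsum hphat h
    obtain ⟨a1, a2⟩ := h1; obtain ⟨b1, b2⟩ := h2
    linarith
  · have hlt : l < m := lt_of_le_of_ne h (Ne.symm hne)
    have := phat_add_le hp hsum hphat hlt
    obtain ⟨a1, a2⟩ := h1; obtain ⟨b1, b2⟩ := h2
    linarith

theorem shift_decomp {x : ℝ} (hx : x ∈ Set.Ico (0:ℝ) 1) :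
    ∃ y ∈ Set.Ico (0:ℝ) 1,
      x = phat (dig x 0) + p (dig x 0) * y ∧ dig x = cns (dig x 0) (dig y) := by
  set m := dig x 0 with hm
  have hmem := dig0_mem hp hsum hphat hπ hdig hx
  have hpm := (hp m).1
  refine ⟨(x - phat m) / p m, ⟨?_, ?_⟩, ?_, ?_⟩
  · exact div_nonneg (by linarith [hmem.1]) hpm.le
  · rw [div_lt_one hpm]; linarith [hmem.2]
  · field_simp; ring
  · have hy : (x - phat m) / p m ∈ Set.Ico (0:ℝ) 1 := by
      constructor
      · exact div_nonneg (by linarith [hmem.1]) hpm.le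
      · rw [div_lt_one hpm]; linarith [hmem.2]
    have := dig_T hp hsum hphat hπ hdig hy m
    rw [show phat m + p m * ((x - phat m) / p m) = x by field_simp; ring] at this
    exact this

end Dig

/-- The set of `x ∈ [0,1)` whose `j`-th digit is `n`. -/
def G (dig : ℝ → ℕ → ℕ) (j n : ℕ) : Set ℝ :=
  {x | x ∈ Set.Ico (0:ℝ) 1 ∧ dig x j = n}

section GSets
variable (hp : ∀ i, p i ∈ Set.Ioo (0:ℝ) 1) (hsum : HasSum p 1)
  (hphat : ∀ n, phat n = ∑ i ∈ Finset.range n, p i)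
  (hπ : ∀ a : ℕ → ℕ, π a = phat (a 0) +
      ∑' j : ℕ, (∏ i ∈ Finset.range (j + 1), p (a i)) * phat (a (j + 1)))
  (hdig : ∀ x ∈ Set.Ico (0:ℝ) 1, π (dig x) = x)
include hp hsum hphat hπ hdig
set_option linter.unusedSectionVars false

theorem G_subset (j n : ℕ) : G dig j n ⊆ Set.Ico (0:ℝ) 1 := fun _ hx => hx.1

theorem G_zero (n : ℕ) : G dig 0 n = Set.Ico (phat n) (phat n + p n) := by
  ext x
  constructor
  · rintro ⟨hx, hd⟩
    have := dig0_mem hp hsum hphat hπ hdig hx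
    rwa [hd] at this
  · intro hx
    have hx01 : x ∈ Set.Ico (0:ℝ) 1 := by
      obtain ⟨h1, h2⟩ := hx
      have h3 : phat n + p n ≤ 1 := by
        rw [← phat_succ hp hsum hphat]; exact phat_le_one hp hsum hphat _
      exact ⟨le_trans (phat_nonneg hp hsum hphat n) h1, by linarith⟩
    refine ⟨hx01, ?_⟩
    exact interval_unique hp hsum hphat hπ hdig
      (dig0_mem hp hsum hphat hπ hdig hx01) hx

theorem G_succ (j n : ℕ) :
    G dig (j+1) n = ⋃ m, (fun y => phat m + p m * y) '' G dig j n := by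
  ext x
  constructor
  · rintro ⟨hx, hd⟩
    obtain ⟨y, hy, hxy, hdx⟩ := shift_decomp hp hsum hphat hπ hdig hx
    refine Set.mem_iUnion.2 ⟨dig x 0, y, ⟨hy, ?_⟩, hxy.symm⟩
    have : dig x (j+1) = dig y j := by rw [hdx]; rfl
    rw [← this, hd]
  · intro hx
    obtain ⟨m, y, ⟨hy, hyj⟩, rfl⟩ := Set.mem_iUnion.1 hx
    have hdx := dig_T hp hsum hphat hπ hdig hy m
    refine ⟨T_mem01 hp hsum hphat hπ hdig hy m, ?_⟩
    rw [hdx]; simpa using hyj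

theorem G_zero_inter (m j n : ℕ) :
    G dig 0 m ∩ G dig (j+1) n = (fun y => phat m + p m * y) '' G dig j n := by
  ext x
  constructor
  · rintro ⟨⟨hx, hd0⟩, ⟨_, hd1⟩⟩
    obtain ⟨y, hy, hxy, hdx⟩ := shift_decomp hp hsum hphat hπ hdig hx
    rw [hd0] at hxy hdx
    refine ⟨y, ⟨hy, ?_⟩, hxy.symm⟩
    have : dig x (j+1) = dig y j := by rw [hdx]; rfl
    rw [← this, hd1]
  · rintro ⟨y, ⟨hy, hyj⟩, rfl⟩
    have hdx := dig_T hp hsum hphat hπ hdig hy m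
    have hx01 := T_mem01 hp hsum hphat hπ hdig hy m
    refine ⟨⟨hx01, ?_⟩, hx01, ?_⟩
    · rw [hdx]; rfl
    · rw [hdx]; simpa using hyj

theorem G_succ_inter (i m j n : ℕ) :
    G dig (i+1) m ∩ G dig (j+1) n =
      ⋃ l, (fun y => phat l + p l * y) '' (G dig i m ∩ G dig j n) := by
  ext x
  constructor
  · rintro ⟨⟨hx, hdi⟩, ⟨_, hdj⟩⟩
    obtain ⟨y, hy, hxy, hdx⟩ := shift_decomp hp hsum hphat hπ hdig hx
    refine Set.mem_iUnion.2 ⟨dig x 0, y, ⟨⟨hy, ?_⟩, ⟨hy, ?_⟩⟩, hxy.symm⟩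
    · have : dig x (i+1) = dig y i := by rw [hdx]; rfl
      rw [← this, hdi]
    · have : dig x (j+1) = dig y j := by rw [hdx]; rfl
      rw [← this, hdj]
  · intro hx
    obtain ⟨l, y, ⟨⟨hy, hyi⟩, ⟨_, hyj⟩⟩, rfl⟩ := Set.mem_iUnion.1 hx
    have hdx := dig_T hp hsum hphat hπ hdig hy l
    have hx01 := T_mem01 hp hsum hphat hπ hdig hy l
    exact ⟨⟨hx01, by rw [hdx]; simpa using hyi⟩, ⟨hx01, by rw [hdx]; simpa using hyj⟩⟩

end GSets


section MeasureG
variable (hp : ∀ i, p i ∈ Set.Ioo (0:ℝ) 1) (hsum : HasSum p 1)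
  (hphat : ∀ n, phat n = ∑ i ∈ Finset.range n, p i)
  (hπ : ∀ a : ℕ → ℕ, π a = phat (a 0) +
      ∑' j : ℕ, (∏ i ∈ Finset.range (j + 1), p (a i)) * phat (a (j + 1)))
  (hdig : ∀ x ∈ Set.Ico (0:ℝ) 1, π (dig x) = x)
include hp hsum hphat hπ hdig
set_option linter.unusedSectionVars false

theorem img_eq_preimage (m : ℕ) (S : Set ℝ) :
    (fun y => phat m + p m * y) '' S = (fun x => (p m)⁻¹ * (x - phat m)) ⁻¹' S := by
  have hpm : p m ≠ 0 := ne_of_gt (hp m).1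
  ext x
  simp only [Set.mem_image, Set.mem_preimage]
  constructor
  · rintro ⟨y, hy, rfl⟩
    have : (p m)⁻¹ * (phat m + p m * y - phat m) = y := by field_simp; ring
    rwa [this]
  · intro h
    exact ⟨(p m)⁻¹ * (x - phat m), h, by field_simp; ring⟩

theorem meas_img {S : Set ℝ} (hS : MeasurableSet S) (m : ℕ) :
    MeasurableSet ((fun y => phat m + p m * y) '' S) := by
  rw [img_eq_preimage hp hsum hphat hπ hdig]
  exact (measurable_const.mul (measurable_id.sub measurable_const)) hS

theorem vol_img {S : Set ℝ} (hS : MeasurableSet S) (m : ℕ) :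
    volume ((fun y => phat m + p m * y) '' S) = ENNReal.ofReal (p m) * volume S := by
  have hpm := (hp m).1
  rw [img_eq_preimage hp hsum hphat hπ hdig]
  have hcomp : (fun x : ℝ => (p m)⁻¹ * (x - phat m)) =
      (fun z : ℝ => (p m)⁻¹ * z) ∘ (fun x : ℝ => x + (-phat m)) := by
    funext x; simp [sub_eq_add_neg]
  rw [hcomp, Set.preimage_comp, measure_preimage_add_right volume (-phat m),
    Real.volume_preimage_mul_left (inv_ne_zero (ne_of_gt hpm)), inv_inv, abs_of_pos hpm]

theorem tsum_ofReal_p : ∑' m, ENNReal.ofReal (p m) = 1 := by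
  rw [← ENNReal.ofReal_tsum_of_nonneg (fun n => (hp n).1.le) hsum.summable,
    hsum.tsum_eq, ENNReal.ofReal_one]

theorem interval_disj {m l : ℕ} (h : m ≠ l) :
    Disjoint (Set.Ico (phat m) (phat m + p m)) (Set.Ico (phat l) (phat l + p l)) := by
  rw [Set.Ico_disjoint_Ico]
  rcases Nat.lt_or_ge m l with hlt | hge
  · calc min (phat m + p m) (phat l + p l) ≤ phat m + p m := min_le_left _ _
      _ ≤ phat l := phat_add_le hp hsum hphat hlt
      _ ≤ max (phat m) (phat l) := le_max_right _ _
  · have hlt : l < m := lt_of_le_of_ne hge (Ne.symm h)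
    calc min (phat m + p m) (phat l + p l) ≤ phat l + p l := min_le_right _ _
      _ ≤ phat m := phat_add_le hp hsum hphat hlt
      _ ≤ max (phat m) (phat l) := le_max_left _ _

theorem img_subset_interval {S : Set ℝ} (hS : S ⊆ Set.Ico (0:ℝ) 1) (m : ℕ) :
    (fun y => phat m + p m * y) '' S ⊆ Set.Ico (phat m) (phat m + p m) := by
  rintro x ⟨y, hy, rfl⟩
  exact T_mem hp hsum hphat hπ hdig (hS hy) m

theorem vol_iUnion_img (S : ℕ → Set ℝ) (hmeas : ∀ m, MeasurableSet (S m))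
    (hsub : ∀ m, S m ⊆ Set.Ico (0:ℝ) 1) :
    volume (⋃ m, (fun y => phat m + p m * y) '' S m)
      = ∑' m, ENNReal.ofReal (p m) * volume (S m) := by
  rw [measure_iUnion ?_ (fun m => meas_img hp hsum hphat hπ hdig (hmeas m) m)]
  · exact tsum_congr fun m => vol_img hp hsum hphat hπ hdig (hmeas m) m
  · intro m l hml
    exact ((interval_disj hp hsum hphat hπ hdig hml).mono
      (img_subset_interval hp hsum hphat hπ hdig (hsub m) m)
      (img_subset_interval hp hsum hphat hπ hdig (hsub l) l))

theorem G_meas (j n : ℕ) : MeasurableSet (G dig j n) := by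
  induction j generalizing n with
  | zero => rw [G_zero hp hsum hphat hπ hdig]; exact measurableSet_Ico
  | succ j ih =>
    rw [G_succ hp hsum hphat hπ hdig]
    exact MeasurableSet.iUnion fun m => meas_img hp hsum hphat hπ hdig (ih n) m

theorem vol_G (j n : ℕ) : volume (G dig j n) = ENNReal.ofReal (p n) := by
  induction j generalizing n with
  | zero =>
    rw [G_zero hp hsum hphat hπ hdig, Real.volume_Ico]
    simp
  | succ j ih =>
    rw [G_succ hp hsum hphat hπ hdig,
      vol_iUnion_img hp hsum hphat hπ hdig (fun _ => G dig j n)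
        (fun _ => G_meas hp hsum hphat hπ hdig j n)
        (fun _ => G_subset hp hsum hphat hπ hdig j n)]
    rw [tsum_congr (fun m => by rw [ih n]), ENNReal.tsum_mul_right,
      tsum_ofReal_p hp hsum hphat hπ hdig, one_mul]

theorem vol_G_inter_lt (d : ℕ) (i m n : ℕ) :
    volume (G dig i m ∩ G dig (i + (d+1)) n)
      = ENNReal.ofReal (p m) * ENNReal.ofReal (p n) := by
  induction i generalizing m n with
  | zero =>
    rw [show 0 + (d+1) = d + 1 from Nat.zero_add _,
      G_zero_inter hp hsum hphat hπ hdig,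
      vol_img hp hsum hphat hπ hdig (G_meas hp hsum hphat hπ hdig d n),
      vol_G hp hsum hphat hπ hdig]
  | succ i ih =>
    rw [show i + 1 + (d+1) = (i + (d+1)) + 1 by omega,
      G_succ_inter hp hsum hphat hπ hdig,
      vol_iUnion_img hp hsum hphat hπ hdig
        (fun _ => G dig i m ∩ G dig (i + (d+1)) n)
        (fun _ => (G_meas hp hsum hphat hπ hdig i m).inter
          (G_meas hp hsum hphat hπ hdig _ n))
        (fun _ x hx => hx.1.1)]
    rw [tsum_congr (fun l => by rw [ih m n]), ENNReal.tsum_mul_right,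
      tsum_ofReal_p hp hsum hphat hπ hdig, one_mul]

theorem vol_G_inter {i j : ℕ} (h : i ≠ j) (m n : ℕ) :
    volume (G dig i m ∩ G dig j n)
      = ENNReal.ofReal (p m) * ENNReal.ofReal (p n) := by
  rcases Nat.lt_or_ge i j with hlt | hge
  · rw [show j = i + ((j - i - 1) + 1) by omega]
    exact vol_G_inter_lt hp hsum hphat hπ hdig _ i m n
  · have hlt : j < i := lt_of_le_of_ne hge (Ne.symm h)
    rw [Set.inter_comm, show i = j + ((i - j - 1) + 1) by omega, mul_comm]
    exact vol_G_inter_lt hp hsum hphat hπ hdig _ j n m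

end MeasureG



theorem indepFun_indicator_of_indepSet {Ω : Type*} [MeasurableSpace Ω] {μ : Measure Ω}
    {A B : Set Ω} (h : ProbabilityTheory.IndepSet A B μ) :
    ProbabilityTheory.IndepFun (A.indicator fun _ => (1:ℝ)) (B.indicator fun _ => (1:ℝ)) μ := by
  rw [ProbabilityTheory.indepFun_iff_measure_inter_preimage_eq_mul]
  intro s t _hs _ht
  classical
  rw [Set.indicator_const_preimage_eq_union, Set.indicator_const_preimage_eq_union]
  have h' := (ProbabilityTheory.Indep_iff _ _ μ).1 h
  apply h'
  · refine MeasurableSet.union (MeasurableSet.ite' (fun _ => ?_) fun _ => ?_)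
      (MeasurableSet.ite' (fun _ => ?_) fun _ => ?_)
    · exact MeasurableSpace.measurableSet_generateFrom rfl
    · exact @MeasurableSet.empty _ (MeasurableSpace.generateFrom {A})
    · exact (MeasurableSpace.measurableSet_generateFrom (Set.mem_singleton _)).compl
    · exact @MeasurableSet.empty _ (MeasurableSpace.generateFrom {A})
  · refine MeasurableSet.union (MeasurableSet.ite' (fun _ => ?_) fun _ => ?_)
      (MeasurableSet.ite' (fun _ => ?_) fun _ => ?_)
    · exact MeasurableSpace.measurableSet_generateFrom rfl
    · exact @MeasurableSet.empty _ (MeasurableSpace.generateFrom {B})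
    · exact (MeasurableSpace.measurableSet_generateFrom (Set.mem_singleton _)).compl
    · exact @MeasurableSet.empty _ (MeasurableSpace.generateFrom {B})

theorem identDistrib_indicator {Ω : Type*} [MeasurableSpace Ω] {μ : Measure Ω}
    [IsProbabilityMeasure μ] {A B : Set Ω} (hA : MeasurableSet A) (hB : MeasurableSet B)
    (hAB : μ A = μ B) :
    ProbabilityTheory.IdentDistrib (A.indicator fun _ => (1:ℝ))
      (B.indicator fun _ => (1:ℝ)) μ μ := by
  refine ⟨(measurable_const.indicator hA).aemeasurable,
    (measurable_const.indicator hB).aemeasurable, ?_⟩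
  refine Measure.ext fun s hs => ?_
  classical
  rw [Measure.map_apply (measurable_const.indicator hA) hs,
    Measure.map_apply (measurable_const.indicator hB) hs,
    Set.indicator_const_preimage_eq_union, Set.indicator_const_preimage_eq_union]
  by_cases h1 : (1:ℝ) ∈ s <;> by_cases h0 : (0:ℝ) ∈ s <;>
    simp only [h1, h0, if_true, if_false, Set.union_empty, Set.empty_union,
      Set.union_compl_self, Set.union_empty]
  · exact hAB
  · rw [prob_compl_eq_one_sub hA, prob_compl_eq_one_sub hB, hAB]

end DigitFreq14

/-- For Lebesgue-almost every `x ∈ [0,1)` and every digit `n`, the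
frequency of the digit `n` in the digit sequence of `x` exists and equals `p n`.
Here `dig` is the inverse of the coding bijection `π`. -/
theorem digit_frequency_ae
    (p : ℕ → ℝ) (hp : ∀ i, p i ∈ Set.Ioo (0:ℝ) 1) (hsum : HasSum p 1)
    (phat : ℕ → ℝ) (hphat : ∀ n, phat n = ∑ i ∈ Finset.range n, p i)
    (π : (ℕ → ℕ) → ℝ)
    (hπ : ∀ a : ℕ → ℕ, π a = phat (a 0) +
      ∑' j : ℕ, (∏ i ∈ Finset.range (j + 1), p (a i)) * phat (a (j + 1)))
    (dig : ℝ → (ℕ → ℕ)) (hdig : ∀ x ∈ Set.Ico (0:ℝ) 1, π (dig x) = x) :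
    ∀ᵐ x ∂(volume.restrict (Set.Ico (0:ℝ) 1)), ∀ n : ℕ,
      Tendsto (fun i : ℕ =>
          ((Finset.range i).filter (fun j => dig x j = n)).card / (i : ℝ))
        atTop (𝓝 (p n)) := by
  classical
  set μ := volume.restrict (Set.Ico (0:ℝ) 1) with hμ
  haveI : IsProbabilityMeasure μ :=
    ⟨by rw [hμ, Measure.restrict_apply_univ, Real.volume_Ico]; norm_num⟩
  have hGmeas : ∀ j n : ℕ, MeasurableSet (DigitFreq14.G dig j n) :=
    DigitFreq14.G_meas hp hsum hphat hπ hdig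
  have hμG : ∀ j n : ℕ, μ (DigitFreq14.G dig j n) = ENNReal.ofReal (p n) := by
    intro j n
    rw [hμ, Measure.restrict_apply (hGmeas j n),
      Set.inter_eq_self_of_subset_left (DigitFreq14.G_subset hp hsum hphat hπ hdig j n),
      DigitFreq14.vol_G hp hsum hphat hπ hdig j n]
  rw [ae_all_iff]
  intro n
  set X : ℕ → ℝ → ℝ := fun j => (DigitFreq14.G dig j n).indicator (fun _ => (1:ℝ)) with hX
  have hint : Integrable (X 0) μ := (integrable_const (1:ℝ)).indicator (hGmeas 0 n)
  have hindep : Pairwise (Function.onFun (ProbabilityTheory.IndepFun · · μ) X) := by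
    intro i j hij
    apply DigitFreq14.indepFun_indicator_of_indepSet
    rw [ProbabilityTheory.indepSet_iff_measure_inter_eq_mul (hGmeas i n) (hGmeas j n) μ,
      hμG i n, hμG j n, hμ,
      Measure.restrict_apply ((hGmeas i n).inter (hGmeas j n)),
      Set.inter_eq_self_of_subset_left
        (fun x hx => hx.1.1 : DigitFreq14.G dig i n ∩ DigitFreq14.G dig j n ⊆ Set.Ico (0:ℝ) 1)]
    exact DigitFreq14.vol_G_inter hp hsum hphat hπ hdig hij n n
  have hident : ∀ i, ProbabilityTheory.IdentDistrib (X i) (X 0) μ μ := fun i =>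
    DigitFreq14.identDistrib_indicator (hGmeas i n) (hGmeas 0 n) (by rw [hμG, hμG])
  have hSLLN := ProbabilityTheory.strong_law_ae_real X hint hindep hident
  have hE : ∫ x, X 0 x ∂μ = p n := by
    have h : ∫ x, (DigitFreq14.G dig 0 n).indicator (fun _ => (1:ℝ)) x ∂μ
        = (μ (DigitFreq14.G dig 0 n)).toReal := integral_indicator_one (hGmeas 0 n)
    rw [show (∫ x, X 0 x ∂μ) = (μ (DigitFreq14.G dig 0 n)).toReal from h, hμG 0 n]
    exact ENNReal.toReal_ofReal (hp n).1.le
  rw [hE] at hSLLN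
  have hae : ∀ᵐ x ∂μ, x ∈ Set.Ico (0:ℝ) 1 := ae_restrict_mem measurableSet_Ico
  filter_upwards [hSLLN, hae] with x hx hxI
  refine Tendsto.congr (fun i => ?_) hx
  congr 1
  rw [Finset.card_filter]
  push_cast
  refine Finset.sum_congr rfl fun j _ => ?_
  by_cases h : dig x j = n <;>
    simp [hX, Set.indicator, DigitFreq14.G, hxI.1, hxI.2, h]
end
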